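/- arXiv:2406.17631 — 8 statements merged into one kernel-verified Lean document; each statement's English description precedes it below -/
import Mathlib

section
/- Let n and k be nonnegative integers and let G be an (n+k+3)-connected graph. If the isolated toughness of G satisfies I(G) > (n+k+4)/(k+3), then G is a ({K₂,C},n)-factor critical avoidable graph; that is, for every vertex subset W ⊆ V(G) with |W| = n and every edge e of G−W, the graph G−W−e has a spanning subgraph each of whose components is either an edge K₂ or a cycle. -/
open SimpleGraph

variable {α β : Type*}

/-- The graph obtained from `G` by deleting the vertices in `S` (an induced subgraph
on the complement of `S`). -/
def SimpleGraph.delVerts (G : SimpleGraph α) (S : Set α) : SimpleGraph ↥(Sᶜ) :=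
  G.induce Sᶜ

/-- The number of isolated vertices of a graph. -/
noncomputable def isoCount (H : SimpleGraph α) : ℕ :=
  Nat.card {v : α // ∀ w, ¬ H.Adj v w}

/-- The number of connected components of a graph. -/
noncomputable def compCount (H : SimpleGraph α) : ℕ :=
  Nat.card H.ConnectedComponent

/-- A graph is `m`-connected if it has more than `m` vertices and stays connected
after deleting any fewer than `m` vertices. -/
def IsMConnected (G : SimpleGraph α) (m : ℕ) : Prop :=
  m < Nat.card α ∧ ∀ S : Set α, S.ncard < m → (G.delVerts S).Connected

/-- `G` has a spanning subgraph each of whose components is `K₂` or a cycle of length ≥ 3. -/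
def HasK2CycleFactor (G : SimpleGraph α) : Prop :=
  ∃ F : SimpleGraph α, F ≤ G ∧ ∀ c : F.ConnectedComponent,
    Nonempty ((F.induce c.supp) ≃g (⊤ : SimpleGraph (Fin 2))) ∨
    ∃ m : ℕ, 3 ≤ m ∧ Nonempty ((F.induce c.supp) ≃g cycleGraph m)

/-- `G` has a spanning subgraph each of whose components is `K₂` or an odd cycle of length ≥ 5. -/
def HasK2OddCycleFactor (G : SimpleGraph α) : Prop :=
  ∃ F : SimpleGraph α, F ≤ G ∧ ∀ c : F.ConnectedComponent,
    Nonempty ((F.induce c.supp) ≃g (⊤ : SimpleGraph (Fin 2))) ∨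
    ∃ m : ℕ, 5 ≤ m ∧ Odd m ∧ Nonempty ((F.induce c.supp) ≃g cycleGraph m)

/-- `B` is (the vertex set of) a block of `H`: a maximal set inducing a connected
subgraph with no cut vertex. -/
def IsBlock (H : SimpleGraph α) (B : Set α) : Prop :=
  ((H.induce B).Connected ∧ ∀ v ∈ B, B = {v} ∨ (H.induce (B \ {v})).Connected) ∧
  ∀ C : Set α, B ⊆ C →
    ((H.induce C).Connected ∧ ∀ v ∈ C, C = {v} ∨ (H.induce (C \ {v})).Connected) → B = C

/-- A triangular cactus: a connected graph each of whose blocks is a triangle;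
by convention the one-vertex graph `K₁` is also a triangular cactus. -/
def IsTriangularCactus (H : SimpleGraph α) : Prop :=
  H.Connected ∧ ((∃ v : α, ∀ w : α, w = v) ∨
    ∀ B : Set α, IsBlock H B → Nonempty ((H.induce B) ≃g (⊤ : SimpleGraph (Fin 3))))

/-- The number of connected components of `H` that are triangular cacti. -/
noncomputable def ctcCount (H : SimpleGraph α) : ℕ :=
  Nat.card {c : H.ConnectedComponent // IsTriangularCactus (H.induce c.supp)}

/-- The join of two graphs: their disjoint union together with all edges between them. -/
def SimpleGraph.join (G₁ : SimpleGraph α) (G₂ : SimpleGraph β) : SimpleGraph (α ⊕ β) where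
  Adj u v := match u, v with
    | Sum.inl a, Sum.inl b => G₁.Adj a b
    | Sum.inr a, Sum.inr b => G₂.Adj a b
    | Sum.inl _, Sum.inr _ => True
    | Sum.inr _, Sum.inl _ => True
  symm := ⟨fun u v => match u, v with
    | Sum.inl _, Sum.inl _ => fun h => G₁.adj_symm h
    | Sum.inr _, Sum.inr _ => fun h => G₂.adj_symm h
    | Sum.inl _, Sum.inr _ => fun _ => trivial
    | Sum.inr _, Sum.inl _ => fun _ => trivial⟩
  loopless := ⟨fun u => by cases u <;> simp⟩

/-- `G` is a `({K₂, C}, n)`-factor critical avoidable graph. -/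
def K2CycleFactorCriticalAvoidable (G : SimpleGraph α) (n : ℕ) : Prop :=
  ∀ W : Set α, W.ncard = n → ∀ u v : α, u ∉ W → v ∉ W → G.Adj u v →
    HasK2CycleFactor ((G.deleteEdges {s(u, v)}).delVerts W)

/-- `G` is a `({K₂, C_{2i+1} | i ≥ 2}, n)`-factor critical avoidable graph. -/
def K2OddCycleFactorCriticalAvoidable (G : SimpleGraph α) (n : ℕ) : Prop :=
  ∀ W : Set α, W.ncard = n → ∀ u v : α, u ∉ W → v ∉ W → G.Adj u v →
    HasK2OddCycleFactor ((G.deleteEdges {s(u, v)}).delVerts W)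


section AuxFactor

open Function

variable {γ : Type*} [Fintype γ]

lemma aux_perm_iterate_orderOf (σ : Equiv.Perm γ) (x : γ) : (⇑σ)^[orderOf σ] x = x := by
  show ⇑(σ ^ orderOf σ) x = x
  rw [pow_orderOf_eq_one]; rfl

lemma aux_perm_mem_periodicPts (σ : Equiv.Perm γ) (x : γ) : x ∈ periodicPts (⇑σ) :=
  mk_mem_periodicPts (orderOf_pos σ) (aux_perm_iterate_orderOf σ x)

theorem aux_hall_perm_factor (H : SimpleGraph γ) (σ : Equiv.Perm γ)
    (hσ : ∀ x, H.Adj x (σ x)) : HasK2CycleFactor H := by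
  classical
  set F : SimpleGraph γ := SimpleGraph.fromRel (fun a b => σ a = b) with hF
  have hadj : ∀ a b, F.Adj a b ↔ a ≠ b ∧ (σ a = b ∨ σ b = a) := by
    intro a b; simp [hF, SimpleGraph.fromRel_adj, eq_comm]
  have hne : ∀ a, σ a ≠ a := fun a => fun h => (H.irrefl (h ▸ hσ a))
  have hFH : F ≤ H := by
    intro a b hab
    rw [hadj] at hab
    rcases hab with ⟨h1, h2 | h2⟩
    · exact h2 ▸ hσ a
    · exact (h2 ▸ hσ b).symm
  refine ⟨F, hFH, ?_⟩
  intro c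
  obtain ⟨x, hx⟩ := c.exists_rep
  have hmpos : 0 < minimalPeriod (⇑σ) x :=
    minimalPeriod_pos_of_mem_periodicPts (aux_perm_mem_periodicPts σ x)
  have hm1 : minimalPeriod (⇑σ) x ≠ 1 := fun h =>
    hne x (minimalPeriod_eq_one_iff_isFixedPt.mp h)
  obtain ⟨m', hmeq⟩ : ∃ m', minimalPeriod (⇑σ) x = m' + 2 :=
    ⟨minimalPeriod (⇑σ) x - 2, by omega⟩
  set m : ℕ := m' + 2 with hmdef
  have hinv : ∀ a : γ, (⇑σ)^[orderOf σ - 1] a = σ⁻¹ a := by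
    intro a
    apply σ.injective
    have h2 : σ ((⇑σ)^[orderOf σ - 1] a) = (⇑σ)^[orderOf σ] a := by
      rw [← Function.iterate_succ_apply' (⇑σ)]
      congr 1
      have := orderOf_pos σ; omega
    rw [h2, aux_perm_iterate_orderOf, ← Equiv.Perm.mul_apply σ σ⁻¹, mul_inv_cancel, Equiv.Perm.one_apply]
  have reach_orbit : ∀ a b : γ, F.Reachable a b → ∃ i : ℕ, (⇑σ)^[i] a = b := by
    intro a b hr
    obtain ⟨p⟩ := hr
    induction p with
    | nil => exact ⟨0, rfl⟩
    | @cons a z b h p ih =>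
      obtain ⟨i, hi⟩ := ih
      rw [hadj] at h
      rcases h.2 with h2 | h2
      · refine ⟨i + 1, ?_⟩
        rw [Function.iterate_add_apply, Function.iterate_one, h2, hi]
      · refine ⟨i + (orderOf σ - 1), ?_⟩
        subst h2
        rw [Function.iterate_add_apply, hinv, ← Equiv.Perm.mul_apply σ⁻¹ σ, inv_mul_cancel, Equiv.Perm.one_apply, hi]
  have orbit_reach : ∀ (i : ℕ), F.Reachable x ((⇑σ)^[i] x) := by
    intro i
    induction i with
    | zero => exact Reachable.refl x
    | succ i ih =>
      refine ih.trans (Adj.reachable ?_)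
      rw [hadj, Function.iterate_succ_apply']
      exact ⟨(hne _).symm, Or.inl rfl⟩
  have hsupp : ∀ y, y ∈ c.supp ↔ ∃ i : ℕ, i < m ∧ (⇑σ)^[i] x = y := by
    intro y
    constructor
    · intro hy
      rw [SimpleGraph.ConnectedComponent.mem_supp_iff] at hy
      have hrxy : F.Reachable x y := by
        rw [← hx] at hy
        exact (SimpleGraph.ConnectedComponent.exact hy).symm
      obtain ⟨i, hi⟩ := reach_orbit x y hrxy
      refine ⟨i % m, Nat.mod_lt _ (by omega), ?_⟩
      rw [← hmeq, iterate_mod_minimalPeriod_eq, hi]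
    · rintro ⟨i, _, rfl⟩
      rw [SimpleGraph.ConnectedComponent.mem_supp_iff, ← hx]
      exact SimpleGraph.ConnectedComponent.sound (orbit_reach i).symm
  have hmem : ∀ i : Fin m, (⇑σ)^[i.val] x ∈ c.supp := fun i =>
    (hsupp _).mpr ⟨i.val, i.isLt, rfl⟩
  set φ : Fin m → c.supp := fun i => ⟨(⇑σ)^[i.val] x, hmem i⟩ with hφ
  have hiterinj : ∀ i j : ℕ, i < m → j < m → (⇑σ)^[i] x = (⇑σ)^[j] x → i = j := by
    intro i j hi hj h
    exact iterate_injOn_Iio_minimalPeriod (by omega : i < minimalPeriod (⇑σ) x)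
      (by omega : j < minimalPeriod (⇑σ) x) h
  have hφinj : Function.Injective φ := by
    intro i j hij
    exact Fin.ext (hiterinj _ _ i.isLt j.isLt (congrArg Subtype.val hij))
  have hφsurj : Function.Surjective φ := by
    rintro ⟨y, hy⟩
    obtain ⟨i, hilt, hi⟩ := (hsupp y).mp hy
    exact ⟨⟨i, hilt⟩, Subtype.ext hi⟩
  have hstep : ∀ i j : Fin m, σ ((⇑σ)^[i.val] x) = (⇑σ)^[j.val] x ↔ j = i + 1 := by
    intro i j
    have h1 : σ ((⇑σ)^[i.val] x) = (⇑σ)^[(i.val + 1) % m] x := by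
      have hmod := @iterate_mod_minimalPeriod_eq γ (⇑σ) x (i.val + 1)
      rw [hmeq] at hmod
      rw [hmod, Function.iterate_succ_apply']
    have hv : ((i + 1 : Fin m)).val = (i.val + 1) % m := by
      simp [Fin.add_def]
    constructor
    · intro h
      rw [h1] at h
      refine (Fin.ext ?_).symm
      rw [hv]
      exact hiterinj _ _ (Nat.mod_lt _ (by omega)) j.isLt h
    · rintro rfl
      rw [h1, hv]
  have key : ∀ i j : Fin m, (F.induce c.supp).Adj (φ i) (φ j) ↔ (cycleGraph m).Adj i j := by
    intro i j
    have ind : (F.induce c.supp).Adj (φ i) (φ j) ↔ F.Adj ((φ i) : γ) ((φ j) : γ) := Iff.rfl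
    rw [ind, hadj, cycleGraph_adj]
    show ((⇑σ)^[i.val] x ≠ (⇑σ)^[j.val] x ∧ _) ↔ _
    constructor
    · rintro ⟨hne', h | h⟩
      · right
        rw [(hstep i j).mp h, add_sub_cancel_left]
      · left
        rw [(hstep j i).mp h, add_sub_cancel_left]
    · intro h
      have hij : j = i + 1 ∨ i = j + 1 := by
        rcases h with h | h
        · exact Or.inr (by rw [sub_eq_iff_eq_add] at h; rw [h, add_comm])
        · exact Or.inl (by rw [sub_eq_iff_eq_add] at h; rw [h, add_comm])
      have hne'' : (⇑σ)^[i.val] x ≠ (⇑σ)^[j.val] x := by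
        intro hcon
        have hij' : i = j := Fin.ext (hiterinj _ _ i.isLt j.isLt hcon)
        subst hij'
        rcases hij with h' | h' <;>
        · rw [left_eq_add] at h'
          exact one_ne_zero h'
      refine ⟨hne'', ?_⟩
      rcases hij with h' | h'
      · exact Or.inl ((hstep i j).mpr h')
      · exact Or.inr ((hstep j i).mpr h')
  have hiso : Nonempty ((F.induce c.supp) ≃g cycleGraph m) := by
    set e : Fin m ≃ c.supp := Equiv.ofBijective φ ⟨hφinj, hφsurj⟩ with he
    have hy : ∀ y, φ (e.symm y) = y := fun y => e.apply_symm_apply y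
    refine ⟨⟨e.symm, ?_⟩⟩
    intro a b
    rw [← key]
    rw [hy, hy]
  rcases Nat.eq_zero_or_pos m' with h2 | h3
  · left
    subst h2
    obtain ⟨e⟩ := hiso
    rw [cycleGraph_two_eq_top] at e
    exact ⟨e⟩
  · exact Or.inr ⟨m, by omega, hiso⟩

theorem aux_hall_to_factor [DecidableEq γ] (H : SimpleGraph γ) (t : γ → Finset γ)
    (ht : ∀ x y, y ∈ t x ↔ H.Adj x y)
    (hall : ∀ A : Finset γ, A.card ≤ (A.biUnion t).card) : HasK2CycleFactor H := by
  obtain ⟨f, hinj, hf⟩ := (Finset.all_card_le_biUnion_card_iff_existsInjective' t).mp hall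
  have hbij : Function.Bijective f := Finite.injective_iff_bijective.mp hinj
  exact aux_hall_perm_factor H (Equiv.ofBijective f hbij)
    (fun x => (ht x (f x)).mp (hf x))

lemma aux_isolated_contra {V : Type*} (G : SimpleGraph V) (S' : Set V)
    (hconn : (G.delVerts S').Connected)
    (z : V) (hz : z ∉ S') (hziso : ∀ y, y ∉ S' → ¬ G.Adj z y)
    (y : V) (hy : y ∉ S') (hyz : y ≠ z) : False := by
  have hr : (G.delVerts S').Reachable ⟨z, hz⟩ ⟨y, hy⟩ := hconn.preconnected _ _
  obtain ⟨p⟩ := hr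
  cases p with
  | nil => exact hyz rfl
  | @cons _ w _ h p => exact hziso _ w.prop h

lemma aux_card_le_isoCount {V : Type*} [Fintype V] (G : SimpleGraph V) (S : Set V)
    (J : Finset V) (hJS : ∀ z ∈ J, z ∉ S)
    (hisoJ : ∀ z ∈ J, ∀ y, y ∉ S → ¬ G.Adj z y) :
    J.card ≤ isoCount (G.delVerts S) := by
  classical
  set f : {x // x ∈ J} → {v : ↥Sᶜ // ∀ w, ¬ (G.delVerts S).Adj v w} :=
    fun z => ⟨⟨z.val, hJS _ z.prop⟩, fun w hw => hisoJ _ z.prop w.val w.prop hw⟩ with hfdef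
  have hfinj : Function.Injective f := by
    intro a b hab
    apply Subtype.ext
    exact congrArg (fun r => (r.val : V)) hab
  calc J.card = Nat.card {x // x ∈ J} := (Nat.card_eq_finsetCard J).symm
    _ ≤ isoCount (G.delVerts S) := Nat.card_le_card_of_injective f hfinj

end AuxFactor

/-- If `G` is `(n+k+3)`-connected and its isolated toughness exceeds
`(n+k+4)/(k+3)` (expressed pointwise: every `S` with at least two isolated vertices in
`G − S` satisfies `(n+k+4)/(k+3) < |S| / i(G−S)`), then `G` is a
`({K₂, C}, n)`-factor critical avoidable graph. -/
theorem statement0 {V : Type*} [Fintype V] (n k : ℕ) (G : SimpleGraph V)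
    (hconn : IsMConnected G (n + k + 3))
    (hiso : ∀ S : Set V, 2 ≤ isoCount (G.delVerts S) →
      ((n : ℝ) + k + 4) / ((k : ℝ) + 3) <
        (S.ncard : ℝ) / (isoCount (G.delVerts S) : ℝ)) :
    K2CycleFactorCriticalAvoidable G n := by
  classical
  intro W hW u v hu hv huv
  have huvne : u ≠ v := G.ne_of_adj huv
  set H : SimpleGraph ↥(Wᶜ) := (G.deleteEdges {s(u, v)}).delVerts W with hH
  have hcardV : n + k + 3 < Fintype.card V := by
    have := hconn.1; rwa [Nat.card_eq_fintype_card] at this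
  -- apply Hall
  refine aux_hall_to_factor H (fun x => H.neighborFinset x)
    (fun x y => SimpleGraph.mem_neighborFinset H x y) ?_
  by_contra hA
  push_neg at hA
  obtain ⟨A, hAcard⟩ := hA
  set NA : Finset ↥(Wᶜ) := A.biUnion (fun x => H.neighborFinset x) with hNA
  set T : Finset ↥(Wᶜ) := NA \ A with hT
  set I : Finset ↥(Wᶜ) := A \ NA with hI
  -- counting: T.card + 1 ≤ I.card
  have hTI : T.card + 1 ≤ I.card := by
    have h1 : I.card + (A ∩ NA).card = A.card := by
      rw [hI, ← Finset.sdiff_inter_self_left A NA]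
      exact Finset.card_sdiff_add_card_eq_card Finset.inter_subset_left
    have h2 : T.card + (NA ∩ A).card = NA.card := by
      rw [hT, ← Finset.sdiff_inter_self_left NA A]
      exact Finset.card_sdiff_add_card_eq_card Finset.inter_subset_left
    have h3 : (A ∩ NA).card = (NA ∩ A).card := by rw [Finset.inter_comm]
    omega
  -- neighbors of I-vertices (in H) lie in T
  have hIadj : ∀ z ∈ I, ∀ y : ↥(Wᶜ), H.Adj z y → y ∈ T := by
    intro z hz y hzy
    have hzA : z ∈ A := (Finset.mem_sdiff.mp hz).1
    have hzNA : z ∉ NA := (Finset.mem_sdiff.mp hz).2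
    have hyNA : y ∈ NA := by
      rw [hNA]
      exact Finset.mem_biUnion.mpr ⟨z, hzA, (SimpleGraph.mem_neighborFinset H z y).mpr hzy⟩
    have hyA : y ∉ A := by
      intro hyA
      exact hzNA (Finset.mem_biUnion.mpr
        ⟨y, hyA, (SimpleGraph.mem_neighborFinset H y z).mpr hzy.symm⟩)
    exact Finset.mem_sdiff.mpr ⟨hyNA, hyA⟩
  -- lift to V
  set Tv : Finset V := T.image Subtype.val with hTv
  set Iv : Finset V := I.image Subtype.val with hIv
  have hTvcard : Tv.card = T.card := Finset.card_image_of_injective T Subtype.val_injective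
  have hIvcard : Iv.card = I.card := Finset.card_image_of_injective I Subtype.val_injective
  have hInotT : ∀ z : ↥(Wᶜ), z ∈ I → (z : V) ∉ Tv := by
    intro z hz hcon
    obtain ⟨z', hz', hzz'⟩ := Finset.mem_image.mp hcon
    have hz'z : z' = z := Subtype.ext hzz'
    subst hz'z
    exact (Finset.mem_sdiff.mp hz).2 (Finset.mem_sdiff.mp hz').1
  have hInotW : ∀ z : ↥(Wᶜ), z ∈ I → (z : V) ∉ W := fun z _ => z.prop
  -- P1 : all G-neighbours of an I-vertex are controlled
  have P1 : ∀ z : ↥(Wᶜ), z ∈ I → ∀ y : V, G.Adj ↑z y →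
      (y ∈ Tv ∨ y ∈ W) ∨ ((z : V) = u ∧ y = v) ∨ ((z : V) = v ∧ y = u) := by
    intro z hz y hzy
    by_cases hyW : y ∈ W
    · exact Or.inl (Or.inr hyW)
    by_cases hsym : s((z : V), y) = s(u, v)
    · right
      rcases Sym2.eq_iff.mp hsym with ⟨h1, h2⟩ | ⟨h1, h2⟩
      · exact Or.inl ⟨h1, h2⟩
      · exact Or.inr ⟨h1, h2⟩
    · left; left
      have hyc : y ∈ Wᶜ := hyW
      have hadjH : H.Adj z ⟨y, hyc⟩ := by
        show (G.deleteEdges {s(u, v)}).Adj ↑z y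
        rw [SimpleGraph.deleteEdges_adj]
        exact ⟨hzy, by simpa using hsym⟩
      have hyT := hIadj z hz ⟨y, hyc⟩ hadjH
      exact Finset.mem_image.mpr ⟨⟨y, hyc⟩, hyT, rfl⟩
  -- ncard bounds for the separators we use
  have hS2 : (↑Tv ∪ W : Set V).ncard ≤ T.card + n := by
    calc (↑Tv ∪ W : Set V).ncard ≤ (↑Tv : Set V).ncard + W.ncard :=
          Set.ncard_union_le _ _
      _ = T.card + n := by rw [Set.ncard_coe_finset, hTvcard, hW]
  have hS3 : ∀ b : V, (↑Tv ∪ W ∪ {b} : Set V).ncard ≤ T.card + n + 1 := by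
    intro b
    calc (↑Tv ∪ W ∪ {b} : Set V).ncard
        ≤ (↑Tv ∪ W : Set V).ncard + ({b} : Set V).ncard := Set.ncard_union_le _ _
      _ ≤ (T.card + n) + 1 := by
          have hone : ({b} : Set V).ncard = 1 := Set.ncard_singleton b
          omega
      _ = T.card + n + 1 := rfl
  -- general small-separator contradiction
  have smallSep : ∀ (S' : Set V), S'.ncard + 1 < n + k + 4 →
      ∀ z : V, z ∉ S' → (∀ y, y ∉ S' → ¬ G.Adj z y) → False := by
    intro S' hS' z hz hziso
    have hSfin : S'.ncard < n + k + 3 := by omega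
    have hcompl : 2 ≤ S'ᶜ.ncard := by
      have hcc := Set.ncard_add_ncard_compl S'
      rw [Nat.card_eq_fintype_card] at hcc
      omega
    obtain ⟨y, hy, hyz⟩ := Set.exists_ne_of_one_lt_ncard (s := S'ᶜ) (by omega) z
    exact aux_isolated_contra G S' (hconn.2 S' hSfin) z hz hziso y hy hyz
  -- isolating an endpoint of e behind Tv ∪ W ∪ {other endpoint}
  have isolEnd : ∀ z : ↥(Wᶜ), z ∈ I → T.card + 1 < k + 3 →
      ((z : V) = u ∨ (z : V) = v) → False := by
    intro z hzI hsmall hzuv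
    set b : V := if (z : V) = u then v else u with hb
    have hzb : (z : V) ≠ b := by
      rw [hb]; split_ifs with h'
      · rw [h']; exact huvne
      · rcases hzuv with h | h
        · exact absurd h h'
        · rw [h]; exact Ne.symm huvne
    have hbound : (↑Tv ∪ W ∪ {b} : Set V).ncard + 1 < n + k + 4 := by
      have := hS3 b; omega
    refine smallSep (↑Tv ∪ W ∪ {b}) hbound ↑z ?_ ?_
    · intro hcon
      rcases hcon with (hcon | hcon) | hcon
      · exact hInotT z hzI hcon
      · exact hInotW z hzI hcon
      · exact hzb (by simpa using hcon)
    · intro y hy hadj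
      rcases P1 z hzI y hadj with (h | h) | ⟨h1, h2⟩ | ⟨h1, h2⟩
      · exact hy (Or.inl (Or.inl h))
      · exact hy (Or.inl (Or.inr h))
      · -- z = u, y = v : then b = v so y ∈ S'
        exact hy (Or.inr (by rw [hb, if_pos h1]; simp [h2]))
      · -- z = v, y = u : then b = u (since z ≠ u as u ≠ v)
        have hzu' : (z : V) ≠ u := by rw [h1]; exact Ne.symm huvne
        exact hy (Or.inr (by rw [hb, if_neg hzu']; simp [h2]))
  -- claim : T.card ≥ k + 3
  have htk : k + 3 ≤ T.card := by
    by_contra htk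
    push_neg at htk
    by_cases hcase : ∃ z ∈ I, (z : V) ≠ u ∧ (z : V) ≠ v
    · obtain ⟨z, hzI, hzu, hzv⟩ := hcase
      refine smallSep (↑Tv ∪ W) (by omega) ↑z ?_ ?_
      · intro hcon
        rcases hcon with hcon | hcon
        · exact hInotT z hzI hcon
        · exact hInotW z hzI hcon
      · intro y hy hadj
        rcases P1 z hzI y hadj with (h | h) | ⟨h, _⟩ | ⟨h, _⟩
        · exact hy (Or.inl h)
        · exact hy (Or.inr h)
        · exact hzu h
        · exact hzv h
    · push_neg at hcase
      have hInonempty : I.Nonempty := Finset.card_pos.mp (by omega)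
      obtain ⟨z, hzI⟩ := hInonempty
      have hIcard2 : I.card ≤ 2 := by
        have hsub : Iv ⊆ {u, v} := by
          intro y hy
          obtain ⟨z', hz', rfl⟩ := Finset.mem_image.mp hy
          rcases em ((z' : V) = u) with h | h
          · simp [h]
          · have h2 := hcase z' hz' h
            simp [h2]
        have hc2 : ({u, v} : Finset V).card ≤ 2 :=
          (Finset.card_insert_le _ _).trans (by simp)
        have := Finset.card_le_card hsub
        omega
      rcases em ((z : V) = u) with h | h
      · exact isolEnd z hzI (by omega) (Or.inl h)
      · exact isolEnd z hzI (by omega) (Or.inr (hcase z hzI h))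
  -- main case : toughness contradiction
  set S : Set V := ↑Tv ∪ W ∪ {v} with hS
  set J : Finset V := Iv.erase v with hJ
  have hJcard : T.card ≤ J.card := by
    have h1 : Iv.card - 1 ≤ J.card := Finset.pred_card_le_card_erase
    omega
  have hJS : ∀ z ∈ J, z ∉ S := by
    intro z hz
    obtain ⟨hzv, hzIv⟩ := Finset.mem_erase.mp hz
    obtain ⟨z', hz', rfl⟩ := Finset.mem_image.mp hzIv
    intro hcon
    rcases hcon with (hcon | hcon) | hcon
    · exact hInotT z' hz' hcon
    · exact hInotW z' hz' hcon
    · exact hzv (by simpa using hcon)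
  have hisoJ : ∀ z ∈ J, ∀ y, y ∉ S → ¬ G.Adj z y := by
    intro z hz y hy hadj
    obtain ⟨hzv, hzIv⟩ := Finset.mem_erase.mp hz
    obtain ⟨z', hz', rfl⟩ := Finset.mem_image.mp hzIv
    rcases P1 z' hz' y hadj with (h | h) | ⟨h1, h2⟩ | ⟨h1, h2⟩
    · exact hy (Or.inl (Or.inl h))
    · exact hy (Or.inl (Or.inr h))
    · exact hy (Or.inr (by simp [h2]))
    · exact hzv h1
  have hcount : J.card ≤ isoCount (G.delVerts S) := aux_card_le_isoCount G S J hJS hisoJ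
  have hi2 : 2 ≤ isoCount (G.delVerts S) := by omega
  have happly := hiso S hi2
  set i : ℕ := isoCount (G.delVerts S) with hidef
  have hipos : (0 : ℝ) < (i : ℝ) := by
    have : 0 < i := by omega
    exact_mod_cast this
  have hden : (0 : ℝ) < (k : ℝ) + 3 := by positivity
  rw [div_lt_div_iff₀ hden hipos] at happly
  have hnat : (n + k + 4) * i < S.ncard * (k + 3) := by
    have : ((n : ℝ) + k + 4) * i < (S.ncard : ℝ) * ((k : ℝ) + 3) := happly
    exact_mod_cast this
  have hs_le : S.ncard ≤ T.card + n + 1 := hS3 v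
  have hi_ge : T.card ≤ i := le_trans hJcard hcount
  have e1 : (n + k + 4) * T.card ≤ (n + k + 4) * i := Nat.mul_le_mul_left _ hi_ge
  have e2 : S.ncard * (k + 3) ≤ (T.card + n + 1) * (k + 3) := Nat.mul_le_mul_right _ hs_le
  have e3 : n * (k + 3) ≤ n * T.card := Nat.mul_le_mul_left n htk
  have keyineq : (n + k + 4) * T.card < (T.card + n + 1) * (k + 3) :=
    lt_of_le_of_lt e1 (lt_of_lt_of_le hnat e2)
  nlinarith [keyineq, e3, htk]
end

section
/- A graph G admits a {K₂,C}-factor (a spanning subgraph each of whose components is an edge K₂ or a cycle) if and only if i(G−X) ≤ |X| for every vertex subset X ⊆ V(G). -/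
open SimpleGraph

variable {α β : Type*}

section AuxK2C
open Function

lemma iso_of_adj_iff {β : Type*} {k : ℕ} (hk : 2 ≤ k) (H : SimpleGraph β) (e : Fin k ≃ β)
    (h : ∀ i j : Fin k, H.Adj (e i) (e j) ↔
      ((j : ℕ) = ((i : ℕ) + 1) % k ∨ (i : ℕ) = ((j : ℕ) + 1) % k)) :
    Nonempty (H ≃g (⊤ : SimpleGraph (Fin 2))) ∨
      ∃ m : ℕ, 3 ≤ m ∧ Nonempty (H ≃g cycleGraph m) := by
  match k, hk with
  | 2, _ =>
    left
    refine ⟨(⟨e, ?_⟩ : (⊤ : SimpleGraph (Fin 2)) ≃g H).symm⟩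
    intro i j
    rw [h]
    simp only [top_adj]
    revert i j; decide
  | (n+3), _ =>
    right
    refine ⟨n + 3, le_add_self, ⟨(⟨e, ?_⟩ : cycleGraph (n+3) ≃g H).symm⟩⟩
    intro i j
    rw [h, cycleGraph_adj]
    constructor
    · rintro (h1 | h1)
      · right
        have : j = i + 1 := by
          apply Fin.ext
          rw [Fin.add_def, h1]
          simp [Fin.val_one]
        rw [this]; simp
      · left
        have : i = j + 1 := by
          apply Fin.ext
          rw [Fin.add_def, h1]
          simp [Fin.val_one]
        rw [this]; simp
    · rintro (h1 | h1)
      · right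
        have : i = j + 1 := by rwa [sub_eq_iff_eq_add'] at h1
        rw [this, Fin.add_def]
        simp [Fin.val_one]
      · left
        have : j = i + 1 := by rwa [sub_eq_iff_eq_add'] at h1
        rw [this, Fin.add_def]
        simp [Fin.val_one]


set_option maxHeartbeats 1000000 in
lemma factor_of_sigma {V : Type*} [Fintype V] (G : SimpleGraph V) (σ : V → V)
    (hinj : Injective σ) (hadj : ∀ v, G.Adj v (σ v)) :
    (∃ F : SimpleGraph V, F ≤ G ∧ ∀ c : F.ConnectedComponent,
      Nonempty ((F.induce c.supp) ≃g (⊤ : SimpleGraph (Fin 2))) ∨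
      ∃ m : ℕ, 3 ≤ m ∧ Nonempty ((F.induce c.supp) ≃g cycleGraph m)) := by
  classical
  set F : SimpleGraph V := SimpleGraph.fromRel (fun u v => σ u = v) with hF
  have hFadj : ∀ u v, F.Adj u v ↔ u ≠ v ∧ (σ u = v ∨ σ v = u) := by
    intro u v; rw [hF, fromRel_adj]
  have hFG : F ≤ G := by
    intro u v h
    rw [hFadj] at h
    rcases h.2 with h2 | h2
    · rw [← h2]; exact hadj u
    · rw [← h2]; exact (hadj v).symm
  have hne : ∀ v, σ v ≠ v := fun v => (hadj v).ne'
  have hadjF : ∀ v, F.Adj v (σ v) := by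
    intro v; rw [hFadj]; exact ⟨(hne v).symm, Or.inl rfl⟩
  -- every point is periodic
  have hper : ∀ v, v ∈ periodicPts σ := by
    intro v
    obtain ⟨a, b, hab, he⟩ := Finite.exists_ne_map_eq_of_infinite (fun n : ℕ => σ^[n] v)
    rcases Nat.lt_or_ge a b with hlt | hge
    · refine mk_mem_periodicPts (n := b - a) (by omega) ?_
      have : σ^[a] (σ^[b-a] v) = σ^[a] v := by
        rw [← iterate_add_apply, Nat.add_sub_cancel' hlt.le]; exact he.symm
      exact (hinj.iterate a this)
    · have hlt : b < a := lt_of_le_of_ne hge (fun hh => hab hh.symm)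
      refine mk_mem_periodicPts (n := a - b) (by omega) ?_
      have : σ^[b] (σ^[a-b] v) = σ^[b] v := by
        rw [← iterate_add_apply, Nat.add_sub_cancel' hlt.le]; exact he
      exact (hinj.iterate b this)
  -- orbit relation
  have orb_trans : ∀ {u v w : V}, (∃ n, σ^[n] u = v) → (∃ n, σ^[n] v = w) → (∃ n, σ^[n] u = w) := by
    rintro u v w ⟨n, rfl⟩ ⟨m, rfl⟩
    exact ⟨m + n, (iterate_add_apply σ m n u)⟩
  have orb_symm : ∀ {u v : V}, (∃ n, σ^[n] u = v) → (∃ n, σ^[n] v = u) := by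
    rintro u v ⟨n, rfl⟩
    obtain ⟨k, hk, hkp⟩ := mem_periodicPts.mp (hper u)
    refine ⟨n * k - n, ?_⟩
    rw [← iterate_add_apply, Nat.sub_add_cancel (Nat.le_mul_of_pos_right n hk),
      iterate_mul]
    exact hkp.iterate n
  have reach_iff : ∀ u v : V, F.Reachable u v ↔ ∃ n, σ^[n] u = v := by
    intro u v
    constructor
    · intro h
      obtain ⟨p⟩ := h
      induction p with
      | nil => exact ⟨0, rfl⟩
      | cons ha _ ih =>
        refine orb_trans ?_ ih
        rw [hFadj] at ha
        rcases ha.2 with h2 | h2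
        · exact ⟨1, h2⟩
        · exact orb_symm ⟨1, h2⟩
    · rintro ⟨n, rfl⟩
      induction n with
      | zero => rfl
      | succ n ih =>
        rw [iterate_succ_apply']
        exact ih.trans (hadjF _).reachable
  refine ⟨F, hFG, ?_⟩
  intro c
  set u := c.out with hu
  have hcu : F.connectedComponentMk u = c := c.out_eq
  set k := minimalPeriod σ u with hkdef
  have hk0 : 0 < k := minimalPeriod_pos_of_mem_periodicPts (hper u)
  have hkper : σ^[k] u = u := iterate_minimalPeriod
  have hk1 : k ≠ 1 := by
    intro h1
    apply hne u
    have := hkper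
    rw [h1] at this
    simpa using this
  have hk2 : 2 ≤ k := by omega
  -- the orbit map
  have hmem : ∀ i : Fin k, σ^[(i : ℕ)] u ∈ c.supp := by
    intro i
    rw [ConnectedComponent.mem_supp_iff, ← hcu, ConnectedComponent.eq, reach_iff]
    exact orb_symm ⟨i, rfl⟩
  have hsurj : ∀ v ∈ c.supp, ∃ i : Fin k, σ^[(i : ℕ)] u = v := by
    intro v hv
    rw [ConnectedComponent.mem_supp_iff, ← hcu, ConnectedComponent.eq, reach_iff] at hv
    obtain ⟨n, hn⟩ := orb_symm hv
    exact ⟨⟨n % k, Nat.mod_lt _ hk0⟩, by rw [← hn]; exact iterate_mod_minimalPeriod_eq⟩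
  have hinj' : ∀ i j : Fin k, σ^[(i : ℕ)] u = σ^[(j : ℕ)] u → i = j := by
    intro i j hij
    exact Fin.ext (iterate_injOn_Iio_minimalPeriod i.2 j.2 hij)
  set ψ : Fin k → c.supp := fun i => ⟨σ^[(i : ℕ)] u, hmem i⟩ with hψ
  have hψbij : Function.Bijective ψ := by
    constructor
    · intro i j hij
      exact hinj' i j (congrArg Subtype.val hij)
    · rintro ⟨v, hv⟩
      obtain ⟨i, hi⟩ := hsurj v hv
      exact ⟨i, Subtype.ext hi⟩
  set e : Fin k ≃ c.supp := Equiv.ofBijective ψ hψbij with he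
  apply iso_of_adj_iff hk2 (F.induce c.supp) e
  intro i j
  have hei : (e i : V) = σ^[(i : ℕ)] u := rfl
  have hsucc : ∀ i : Fin k, σ (σ^[(i : ℕ)] u) = σ^[((i : ℕ) + 1) % k] u := by
    intro i
    rw [iterate_mod_minimalPeriod_eq]
    exact (iterate_succ_apply' σ _ u).symm
  have hivd : ∀ i : Fin k, ((i : ℕ) + 1) % k < k := fun i => Nat.mod_lt _ hk0
  constructor
  · intro hadj'
    have : F.Adj (σ^[(i : ℕ)] u) (σ^[(j : ℕ)] u) := hadj'
    rw [hFadj] at this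
    rcases this.2 with h2 | h2
    · left
      rw [hsucc i] at h2
      exact (iterate_injOn_Iio_minimalPeriod (hivd i) j.2 h2).symm
    · right
      rw [hsucc j] at h2
      exact (iterate_injOn_Iio_minimalPeriod (hivd j) i.2 h2).symm
  · intro h2
    show F.Adj (σ^[(i : ℕ)] u) (σ^[(j : ℕ)] u)
    rw [hFadj]
    have hmodne : ∀ l : Fin k, ((l : ℕ) + 1) % k ≠ (l : ℕ) := by
      intro l h
      rcases Nat.lt_or_ge ((l : ℕ) + 1) k with hlt | hge
      · rw [Nat.mod_eq_of_lt hlt] at h; omega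
      · have hl : (l : ℕ) < k := l.2
        have h1 : (l : ℕ) + 1 = k := by omega
        rw [h1, Nat.mod_self] at h
        omega
    have hij : (i : ℕ) ≠ (j : ℕ) := by
      rcases h2 with h2 | h2
      · intro heq; exact hmodne i (by rw [← h2, heq])
      · intro heq; exact hmodne j (by rw [← h2, heq])
    refine ⟨fun hh => hij (congrArg Fin.val (hinj' i j hh)), ?_⟩
    rcases h2 with h2 | h2
    · left; rw [hsucc i, h2]
    · right; rw [hsucc j, h2]


lemma cycleGraph_adj_succ {m : ℕ} [NeZero m] (hm : 2 ≤ m) (a : Fin m) :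
    (cycleGraph m).Adj a (a + 1) := by
  obtain ⟨n, hn⟩ : ∃ n, m = n + 2 := ⟨m - 2, by omega⟩
  subst hn
  rw [cycleGraph_adj]
  right
  rw [add_sub_cancel_left]


lemma sigma_of_factor {V : Type*} (G : SimpleGraph V)
    (F : SimpleGraph V) (hFG : F ≤ G)
    (hc : ∀ c : F.ConnectedComponent,
      Nonempty ((F.induce c.supp) ≃g (⊤ : SimpleGraph (Fin 2))) ∨
      ∃ m : ℕ, 3 ≤ m ∧ Nonempty ((F.induce c.supp) ≃g cycleGraph m)) :
    ∃ σ : V → V, Injective σ ∧ ∀ v, G.Adj v (σ v) := by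
  classical
  have hτ : ∀ c : F.ConnectedComponent, ∃ τ : c.supp → c.supp,
      Injective τ ∧ ∀ x : c.supp, (F.induce c.supp).Adj x (τ x) := by
    intro c
    rcases hc c with ⟨⟨e⟩⟩ | ⟨m, hm, ⟨e⟩⟩
    · refine ⟨fun x => e.symm (e x + 1), ?_, ?_⟩
      · intro a b hab
        have := e.symm.injective hab
        have h2 : e a = e b := by
          have := congrArg (· + 1) this
          simpa using this
        exact e.injective h2
      · intro x
        have hne : ∀ a : Fin 2, a ≠ a + 1 := by decide
        have hadj : (⊤ : SimpleGraph (Fin 2)).Adj (e x) (e x + 1) := hne (e x)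
        have h2 := e.symm.map_adj_iff.mpr hadj
        rwa [RelIso.symm_apply_apply] at h2
    · haveI : NeZero m := ⟨by omega⟩
      refine ⟨fun x => e.symm (e x + 1), ?_, ?_⟩
      · intro a b hab
        have := e.symm.injective hab
        have h2 : e a = e b := by
          have := congrArg (· + 1) this
          simpa using this
        exact e.injective h2
      · intro x
        have hadj : (cycleGraph m).Adj (e x) (e x + 1) := cycleGraph_adj_succ (by omega) _
        have h2 := e.symm.map_adj_iff.mpr hadj
        rwa [RelIso.symm_apply_apply] at h2
  choose τ hτinj hτadj using hτ
  have memself : ∀ v : V, v ∈ (F.connectedComponentMk v).supp := fun v => rfl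
  set σ : V → V := fun v => (τ (F.connectedComponentMk v) ⟨v, memself v⟩ : V) with hσ
  have hσmem : ∀ v, F.connectedComponentMk (σ v) = F.connectedComponentMk v := by
    intro v
    exact (τ (F.connectedComponentMk v) ⟨v, memself v⟩).2
  have hkey : ∀ (c : F.ConnectedComponent) (x : V) (hx : F.connectedComponentMk x = c),
      σ x = (τ c ⟨x, hx⟩ : V) := by
    intro c x hx
    subst hx
    rfl
  refine ⟨σ, ?_, ?_⟩
  · intro a b hab
    have hcab : F.connectedComponentMk a = F.connectedComponentMk b := by
      rw [← hσmem a, ← hσmem b, hab]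
    have h1 := hkey (F.connectedComponentMk b) a hcab
    have h2 := hkey (F.connectedComponentMk b) b rfl
    rw [h1, h2] at hab
    have := hτinj (F.connectedComponentMk b) (Subtype.ext hab)
    exact congrArg Subtype.val this
  · intro v
    have := hτadj (F.connectedComponentMk v) ⟨v, memself v⟩
    have h2 : F.Adj v (σ v) := by
      simpa [SimpleGraph.induce] using this
    exact hFG h2


lemma cond_of_sigma {V : Type*} [Fintype V] (G : SimpleGraph V) (σ : V → V)
    (hinj : Injective σ) (hadj : ∀ v, G.Adj v (σ v)) :
    ∀ X : Set V, isoCount (G.delVerts X) ≤ X.ncard := by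
  intro X
  have hmem : ∀ v : {v : ↥(Xᶜ) // ∀ w, ¬ (G.delVerts X).Adj v w}, σ (v : V) ∈ X := by
    rintro ⟨⟨v, hv⟩, hiso⟩
    by_contra h
    exact hiso ⟨σ v, h⟩ (hadj v)
  set φ : {v : ↥(Xᶜ) // ∀ w, ¬ (G.delVerts X).Adj v w} → ↥X :=
    fun v => ⟨σ (v : V), hmem v⟩ with hφ
  have hφinj : Injective φ := by
    rintro ⟨⟨a, ha⟩, hai⟩ ⟨⟨b, hb⟩, hbi⟩ hab
    have h1 : σ a = σ b := congrArg Subtype.val hab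
    have h2 := hinj h1
    subst h2
    rfl
  calc isoCount (G.delVerts X) ≤ Nat.card ↥X := Nat.card_le_card_of_injective φ hφinj
    _ = X.ncard := Nat.card_coe_set_eq X


lemma sigma_of_cond {V : Type*} [Fintype V] (G : SimpleGraph V)
    (h : ∀ X : Set V, isoCount (G.delVerts X) ≤ X.ncard) :
    ∃ σ : V → V, Injective σ ∧ ∀ v, G.Adj v (σ v) := by
  classical
  have hall : ∀ A : Finset V, A.card ≤ (A.biUnion fun v => G.neighborFinset v).card := ?_
  · obtain ⟨f, hfinj, hf⟩ := (Finset.all_card_le_biUnion_card_iff_exists_injective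
      (fun v => G.neighborFinset v)).mp hall
    exact ⟨f, hfinj, fun v => (mem_neighborFinset _ _ _).mp (hf v)⟩
  intro A
  set N := A.biUnion (fun v => G.neighborFinset v) with hN
  set T := A \ N with hT
  set NT := T.biUnion (fun v => G.neighborFinset v) with hNT
  set X : Set V := ↑NT with hX
  have hmemN : ∀ {w : V}, w ∈ N ↔ ∃ a ∈ A, G.Adj a w := by
    intro w
    simp [hN, mem_neighborFinset]
  have hmemNT : ∀ {w : V}, w ∈ NT ↔ ∃ t ∈ T, G.Adj t w := by
    intro w
    simp [hNT, mem_neighborFinset]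
  have hTX : ∀ t ∈ T, (t : V) ∈ Xᶜ := by
    intro t ht hmem
    obtain ⟨t', ht', hadj⟩ := hmemNT.mp hmem
    have htN : t ∈ N := hmemN.mpr ⟨t', (Finset.mem_sdiff.mp ht').1, hadj⟩
    exact (Finset.mem_sdiff.mp ht).2 htN
  -- step 1 : T.card ≤ NT.card
  have step1 : T.card ≤ NT.card := by
    set ψ : ↥(↑T : Set V) → {v : ↥(Xᶜ) // ∀ w, ¬ (G.delVerts X).Adj v w} := by
      rintro ⟨t, ht⟩
      refine ⟨⟨t, hTX t (Finset.mem_coe.mp ht)⟩, ?_⟩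
      rintro ⟨w, hw⟩ hadj
      have hGadj : G.Adj t w := hadj
      exact hw (hmemNT.mpr ⟨t, Finset.mem_coe.mp ht, hGadj⟩)
    have hψinj : Injective ψ := by
      rintro ⟨a, ha⟩ ⟨b, hb⟩ hab
      have : (a : V) = b := congrArg (fun x => (x.1 : V)) hab
      exact Subtype.ext this
    calc T.card = (↑T : Set V).ncard := (Set.ncard_coe_finset T).symm
      _ = Nat.card ↥(↑T : Set V) := (Nat.card_coe_set_eq _).symm
      _ ≤ isoCount (G.delVerts X) := Nat.card_le_card_of_injective ψ hψinj
      _ ≤ X.ncard := h X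
      _ = NT.card := by rw [hX, Set.ncard_coe_finset]
  -- step 2 : NT ⊆ N \ A
  have step2 : NT ⊆ N \ A := by
    intro w hw
    obtain ⟨t, ht, hadj⟩ := hmemNT.mp hw
    rw [Finset.mem_sdiff]
    constructor
    · exact hmemN.mpr ⟨t, (Finset.mem_sdiff.mp ht).1, hadj⟩
    · intro hwA
      exact (Finset.mem_sdiff.mp ht).2 (hmemN.mpr ⟨w, hwA, hadj.symm⟩)
  calc A.card = (A \ N).card + (A ∩ N).card := (Finset.card_sdiff_add_card_inter A N).symm
    _ ≤ (N \ A).card + (N ∩ A).card := by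
        rw [Finset.inter_comm]
        exact Nat.add_le_add (step1.trans (Finset.card_le_card step2)) le_rfl
    _ = N.card := Finset.card_sdiff_add_card_inter N A

end AuxK2C

/-- A graph `G` admits a `{K₂, C}`-factor iff `i(G−X) ≤ |X|` for
every vertex subset `X`. -/
theorem statement3 {V : Type*} [Fintype V] (G : SimpleGraph V) :
    HasK2CycleFactor G ↔ ∀ X : Set V, isoCount (G.delVerts X) ≤ X.ncard := by
  constructor
  · rintro ⟨F, hFG, hc⟩
    obtain ⟨σ, hinj, hadj⟩ := sigma_of_factor G F hFG hc
    exact cond_of_sigma G σ hinj hadj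
  · intro h
    obtain ⟨σ, hinj, hadj⟩ := sigma_of_cond G h
    exact factor_of_sigma G σ hinj hadj
end

section
/- Let n and k be nonnegative integers, let G be an (n+k+3)-connected non-complete graph, let W ⊆ V(G) with |W| = n, let e ∈ E(G−W), and set H = G−W−e. If X ⊆ V(H) satisfies i(H−X) ≥ |X| + 1, then |X| ≥ k + 3. -/
open SimpleGraph

variable {α β : Type*}

lemma exists_adj_aux {β : Type*} {G : SimpleGraph β} (h : G.Preconnected) {a b : β}
    (hab : a ≠ b) : ∃ c, G.Adj a c := by
  obtain ⟨p⟩ := h a b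
  cases p with
  | nil => exact absurd rfl hab
  | cons h _ => exact ⟨_, h⟩

lemma key_aux {V : Type*} [Fintype V] {G : SimpleGraph V} {m : ℕ}
    (hconn : IsMConnected G m) (S : Set V) (hS2 : S.ncard + 2 ≤ Nat.card V)
    (hS : S.ncard < m) (w : V) (hw : w ∉ S) : ∃ z, z ∉ S ∧ G.Adj w z := by
  have hconn' := hconn.2 S hS
  have hce : S.ncard + Sᶜ.ncard = Nat.card V := Set.ncard_add_ncard_compl S
  have h2 : 1 < Sᶜ.ncard := by omega
  obtain ⟨x, hx, hxw⟩ := Set.exists_ne_of_one_lt_ncard h2 w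
  have hne : (⟨w, hw⟩ : ↥Sᶜ) ≠ ⟨x, hx⟩ := fun h => hxw (congrArg Subtype.val h).symm
  obtain ⟨c, hc⟩ := exists_adj_aux hconn'.preconnected hne
  exact ⟨↑c, c.2, hc⟩

lemma step3_aux {V : Type*} [Fintype V] {G : SimpleGraph V} {n k : ℕ}
    (hconn : IsMConnected G (n + k + 3))
    (W X : Set V) (hWX : (W ∪ X).ncard ≤ n + 1) (u v : V) (huv : u ≠ v)
    (hu : u ∉ W ∪ X)
    (hiso : ∀ z : ↥((W ∪ X)ᶜ),
      ¬ ((G.deleteEdges {s(u, v)}).delVerts (W ∪ X)).Adj ⟨u, hu⟩ z) : False := by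
  have hV : n + k + 3 < Nat.card V := hconn.1
  set S := insert v (W ∪ X) with hSdef
  have hS : S.ncard ≤ n + 2 := (Set.ncard_insert_le _ _).trans (by omega)
  have huS : u ∉ S := by
    simp only [hSdef, Set.mem_insert_iff, not_or]
    exact ⟨huv, hu⟩
  obtain ⟨z, hz, hadj⟩ := key_aux hconn S (by omega) (by omega) u huS
  have hzv : z ≠ v := fun h => hz (h ▸ Set.mem_insert v _)
  have hzWX : z ∉ W ∪ X := fun h => hz (Set.mem_insert_of_mem _ h)
  apply hiso ⟨z, hzWX⟩
  show (G.deleteEdges {s(u, v)}).Adj u z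
  rw [SimpleGraph.deleteEdges_adj]
  refine ⟨hadj, ?_⟩
  simp only [Set.mem_singleton_iff, Sym2.eq_iff]
  rintro (⟨-, h⟩ | ⟨h, -⟩)
  · exact hzv h
  · exact huv h

/-- With `G` an `(n+k+3)`-connected non-complete graph, `|W| = n`,
`e = uv ∈ E(G−W)` and `H = G−W−e`: if `X ⊆ V(H)` satisfies `i(H−X) ≥ |X| + 1`,
then `|X| ≥ k + 3`. -/
theorem statement5 {V : Type*} [Fintype V] (n k : ℕ) (G : SimpleGraph V)
    (hconn : IsMConnected G (n + k + 3)) (hnc : G ≠ ⊤)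
    (W : Set V) (hW : W.ncard = n) (u v : V) (hu : u ∉ W) (hv : v ∉ W) (huv : G.Adj u v)
    (X : Set V) (hXW : Disjoint X W)
    (hX : X.ncard + 1 ≤ isoCount ((G.deleteEdges {s(u, v)}).delVerts (W ∪ X))) :
    k + 3 ≤ X.ncard := by
  classical
  by_contra hcon
  push_neg at hcon
  have hXle : X.ncard ≤ k + 2 := by omega
  have hV : n + k + 3 < Nat.card V := hconn.1
  have hWX : (W ∪ X).ncard ≤ n + X.ncard := by
    calc (W ∪ X).ncard ≤ W.ncard + X.ncard := Set.ncard_union_le W X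
    _ = n + X.ncard := by rw [hW]
  set H' := (G.deleteEdges {s(u, v)}).delVerts (W ∪ X) with hH'
  -- Step 1: every isolated vertex of H' is u or v
  have hiso : ∀ w : ↥((W ∪ X)ᶜ), (∀ z, ¬ H'.Adj w z) → (w : V) = u ∨ (w : V) = v := by
    intro w hwiso
    by_contra h
    push_neg at h
    obtain ⟨z, hz, hadj⟩ := key_aux hconn (W ∪ X) (by omega) (by omega) ↑w w.2
    apply hwiso ⟨z, hz⟩
    show (G.deleteEdges {s(u, v)}).Adj ↑w z
    rw [SimpleGraph.deleteEdges_adj]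
    refine ⟨hadj, ?_⟩
    simp only [Set.mem_singleton_iff, Sym2.eq_iff]
    rintro (⟨h1, -⟩ | ⟨h1, -⟩)
    · exact h.1 h1
    · exact h.2 h1
  -- Step 2: isoCount H' ≤ 2
  have h2 : isoCount H' ≤ 2 := by
    have hinj : Function.Injective
        (fun w : {w : ↥((W ∪ X)ᶜ) // ∀ z, ¬ H'.Adj w z} =>
          (⟨(w.1 : V), by
            rcases hiso w.1 w.2 with h | h
            · exact h ▸ Set.mem_insert u {v}
            · exact h ▸ Set.mem_insert_of_mem u rfl⟩ : ({u, v} : Set V))) := by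
      intro a b hab
      have h1 := congrArg Subtype.val hab
      exact Subtype.ext (Subtype.ext h1)
    have hle : isoCount H' ≤ Nat.card ({u, v} : Set V) :=
      Nat.card_le_card_of_injective _ hinj
    have : Nat.card ({u, v} : Set V) ≤ 2 := by
      rw [Nat.card_coe_set_eq]
      exact (Set.ncard_insert_le _ _).trans (by simp)
    omega
  have hX1 : X.ncard ≤ 1 := by omega
  -- Step 3: get an isolated vertex and derive a contradiction
  have hpos : 0 < isoCount H' := by omega
  obtain ⟨⟨w₀, hw₀⟩, -⟩ := Nat.card_pos_iff.mp hpos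
  rcases hiso w₀ hw₀ with hwu | hwv
  · refine step3_aux hconn W X (by omega) u v huv.ne (hwu ▸ w₀.2) ?_
    intro z
    have : (⟨u, hwu ▸ w₀.2⟩ : ↥((W ∪ X)ᶜ)) = w₀ := Subtype.ext hwu.symm
    rw [this]
    exact hw₀ z
  · have hswap : ({s(u, v)} : Set (Sym2 V)) = {s(v, u)} := by rw [Sym2.eq_swap]
    refine step3_aux hconn W X (by omega) v u huv.ne' (hwv ▸ w₀.2) ?_
    intro z
    have heq : (⟨v, hwv ▸ w₀.2⟩ : ↥((W ∪ X)ᶜ)) = w₀ := Subtype.ext hwv.symm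
    rw [← hswap, heq]
    exact hw₀ z
end

section
/- Let n and k be nonnegative integers and let G be an (n+k+3)-connected non-complete graph. If there exist W ⊆ V(G) with |W| = n, an edge e ∈ E(G−W), and a set X ⊆ V(G−W−e) such that i((G−W−e)−X) ≥ |X| + 1, then the isolated toughness of G satisfies I(G) ≤ (n+k+4)/(k+3). -/
open SimpleGraph

variable {α β : Type*}

/-- The set of vertices of `G - S` that are isolated in `G - S`, viewed as a subset of `V`. -/
def isoSet (G : SimpleGraph α) (S : Set α) : Set α :=
  {z | z ∉ S ∧ ∀ w ∉ S, ¬ G.Adj z w}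

lemma isoCount_delVerts_eq (G : SimpleGraph α) (S : Set α) :
    isoCount (G.delVerts S) = (isoSet G S).ncard := by
  rw [← Nat.card_coe_set_eq]
  refine Nat.card_congr ⟨fun z => ⟨z.1.1, z.1.2, fun w hw hadj => z.2 ⟨w, hw⟩ hadj⟩,
    fun z => ⟨⟨z.1, z.2.1⟩, fun w hadj => z.2.2 w.1 w.2 hadj⟩, fun z => rfl, fun z => rfl⟩

lemma eq_of_isolated {W : Type*} {H : SimpleGraph W} (hc : H.Connected)
    {z : W} (hz : ∀ y, ¬ H.Adj z y) (y : W) : y = z := by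
  obtain ⟨p⟩ := hc.preconnected z y
  cases p with
  | nil => rfl
  | cons h q => exact absurd h (hz _)

lemma minDegree_of_isMConnected {V : Type*} [Fintype V] {G : SimpleGraph V} {m : ℕ}
    (h : IsMConnected G m) (w : V) : m ≤ (G.neighborSet w).ncard := by
  by_contra hlt
  push_neg at hlt
  have hc := h.2 (G.neighborSet w) hlt
  have hw : w ∈ (G.neighborSet w)ᶜ := fun hww => G.irrefl hww
  have hcard : 1 < ((G.neighborSet w)ᶜ).ncard := by
    have h1 := Set.ncard_add_ncard_compl (G.neighborSet w)
    have h2 := h.1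
    omega
  obtain ⟨x, hx, hxw⟩ := Set.exists_ne_of_one_lt_ncard hcard w
  have hz : ∀ y : ((G.neighborSet w)ᶜ : Set V), ¬ (G.delVerts (G.neighborSet w)).Adj ⟨w, hw⟩ y :=
    fun y hadj => y.2 hadj
  have := eq_of_isolated hc hz ⟨x, hx⟩
  exact hxw (congrArg Subtype.val this)

/-- With `G` an `(n+k+3)`-connected non-complete graph: if some `W`
with `|W| = n`, some edge `e = uv` of `G−W` and some `X ⊆ V(G−W−e)` satisfy
`i((G−W−e)−X) ≥ |X| + 1`, then the isolated toughness of `G` is at most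
`(n+k+4)/(k+3)` (expressed by a witness set attaining the bound). -/
theorem statement6 {V : Type*} [Fintype V] (n k : ℕ) (G : SimpleGraph V)
    (hconn : IsMConnected G (n + k + 3)) (hnc : G ≠ ⊤)
    (hex : ∃ (W : Set V) (u v : V) (X : Set V), W.ncard = n ∧ u ∉ W ∧ v ∉ W ∧
      G.Adj u v ∧ Disjoint X W ∧
      X.ncard + 1 ≤ isoCount ((G.deleteEdges {s(u, v)}).delVerts (W ∪ X))) :
    ∃ S : Set V, 2 ≤ isoCount (G.delVerts S) ∧
      (S.ncard : ℝ) / (isoCount (G.delVerts S) : ℝ) ≤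
        ((n : ℝ) + k + 4) / ((k : ℝ) + 3) := by
  obtain ⟨W, u, v, X, hWn, huW, hvW, huv, hXW, hiso⟩ := hex
  have huvne : u ≠ v := huv.ne
  set T : Set V := W ∪ X with hT
  rw [isoCount_delVerts_eq] at hiso
  set I : Set V := isoSet (G.deleteEdges {s(u, v)}) T with hI
  have hdeg : ∀ z : V, n + k + 3 ≤ (G.neighborSet z).ncard :=
    fun z => minDegree_of_isMConnected hconn z
  have hTcard : T.ncard = n + X.ncard := by
    rw [hT, Set.ncard_union_eq hXW.symm (Set.toFinite _) (Set.toFinite _), hWn]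
  have hmemI : ∀ z ∈ I, ∀ w, G.Adj z w → w ∈ T ∨ (z = u ∧ w = v) ∨ (z = v ∧ w = u) := by
    intro z hz w hadj
    by_cases hwT : w ∈ T
    · exact Or.inl hwT
    · right
      have hne := hz.2 w hwT
      rw [SimpleGraph.deleteEdges_adj] at hne
      have heq : s(z, w) = s(u, v) := by
        by_contra hne2
        exact hne ⟨hadj, by simpa using hne2⟩
      exact Sym2.eq_iff.mp heq
  have hsub : ∀ z ∈ I, z ≠ u → z ≠ v → G.neighborSet z ⊆ T := by
    intro z hz hzu hzv w hw
    rcases hmemI z hz w hw with h | ⟨h1, _⟩ | ⟨h1, _⟩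
    · exact h
    · exact absurd h1 hzu
    · exact absurd h1 hzv
  have hz0 : ∃ z ∈ I, z ≠ u ∧ z ≠ v := by
    by_contra h
    push_neg at h
    have hsub2 : I ⊆ {u, v} := by
      intro z hz
      by_cases hzu : z = u
      · exact Or.inl hzu
      · exact Or.inr (h z hz hzu)
    have h2 : I.ncard ≤ 2 := by
      calc I.ncard ≤ ({u, v} : Set V).ncard := Set.ncard_le_ncard hsub2 (Set.toFinite _)
        _ ≤ 2 := by
          calc ({u, v} : Set V).ncard ≤ ({v} : Set V).ncard + 1 := Set.ncard_insert_le u {v}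
            _ ≤ 2 := by rw [Set.ncard_singleton]
    have hne : I.Nonempty := Set.nonempty_of_ncard_ne_zero (by omega)
    obtain ⟨w0, hw0⟩ := hne
    have hbound : (G.neighborSet w0).ncard ≤ T.ncard + 1 := by
      rcases hsub2 hw0 with h1 | h1
      · have hss : G.neighborSet w0 ⊆ T ∪ {v} := by
          intro w hw
          rcases hmemI w0 hw0 w hw with hh | ⟨_, hh2⟩ | ⟨hh1, _⟩
          · exact Or.inl hh
          · exact Or.inr hh2
          · exact absurd (h1.symm.trans hh1) huvne
        calc (G.neighborSet w0).ncard ≤ (T ∪ {v}).ncard :=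
              Set.ncard_le_ncard hss (Set.toFinite _)
          _ ≤ T.ncard + ({v} : Set V).ncard := Set.ncard_union_le _ _
          _ = T.ncard + 1 := by rw [Set.ncard_singleton]
      · have hss : G.neighborSet w0 ⊆ T ∪ {u} := by
          intro w hw
          rcases hmemI w0 hw0 w hw with hh | ⟨hh1, _⟩ | ⟨_, hh2⟩
          · exact Or.inl hh
          · exact absurd (hh1.symm.trans h1) huvne
          · exact Or.inr hh2
        calc (G.neighborSet w0).ncard ≤ (T ∪ {u}).ncard :=
              Set.ncard_le_ncard hss (Set.toFinite _)
          _ ≤ T.ncard + ({u} : Set V).ncard := Set.ncard_union_le _ _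
          _ = T.ncard + 1 := by rw [Set.ncard_singleton]
    have := hdeg w0
    omega
  obtain ⟨z0, hz0I, hz0u, hz0v⟩ := hz0
  have hX3 : k + 3 ≤ X.ncard := by
    have h1 := hdeg z0
    have h2 := Set.ncard_le_ncard (hsub z0 hz0I hz0u hz0v) (Set.toFinite _)
    omega
  have hIS : I \ {v} ⊆ isoSet G (T ∪ {v}) := by
    rintro z ⟨hzI, hzv⟩
    have hzv' : z ≠ v := hzv
    refine ⟨fun hzS => ?_, fun w hw hadj => ?_⟩
    · rcases hzS with h1 | h1
      · exact hzI.1 h1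
      · exact hzv' h1
    · rcases hmemI z hzI w hadj with hh | ⟨_, hh2⟩ | ⟨hh1, _⟩
      · exact hw (Or.inl hh)
      · exact hw (Or.inr hh2)
      · exact hzv' hh1
  have hiso2 : X.ncard ≤ isoCount (G.delVerts (T ∪ {v})) := by
    rw [isoCount_delVerts_eq]
    have h0 : I ⊆ (I \ {v}) ∪ {v} := by
      intro z hz
      by_cases hzv : z = v
      · exact Or.inr hzv
      · exact Or.inl ⟨hz, hzv⟩
    have h1 : I.ncard ≤ (I \ {v}).ncard + 1 :=
      calc I.ncard ≤ ((I \ {v}) ∪ {v}).ncard := Set.ncard_le_ncard h0 (Set.toFinite _)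
        _ ≤ (I \ {v}).ncard + ({v} : Set V).ncard := Set.ncard_union_le _ _
        _ = (I \ {v}).ncard + 1 := by rw [Set.ncard_singleton]
    have h2 : (I \ {v}).ncard ≤ (isoSet G (T ∪ {v})).ncard :=
      Set.ncard_le_ncard hIS (Set.toFinite _)
    omega
  have hScard : (T ∪ {v}).ncard ≤ n + X.ncard + 1 := by
    calc (T ∪ {v}).ncard ≤ T.ncard + ({v} : Set V).ncard := Set.ncard_union_le _ _
      _ = n + X.ncard + 1 := by rw [Set.ncard_singleton, hTcard]
  refine ⟨T ∪ {v}, by omega, ?_⟩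
  have hipos : 0 < isoCount (G.delVerts (T ∪ {v})) := by omega
  rw [div_le_div_iff₀ (by exact_mod_cast hipos) (by positivity)]
  have key : (T ∪ {v}).ncard * (k + 3) ≤ (n + k + 4) * isoCount (G.delVerts (T ∪ {v})) := by
    nlinarith [hScard, hiso2, hX3]
  have key' := (Nat.cast_le (α := ℝ)).mpr key
  push_cast at key'
  linarith
end

section
/- Let n and k be nonnegative integers and let G be an (n+k+3)-connected non-complete graph. If there exist W ⊆ V(G) with |W| = n, an edge e ∈ E(G−W), and a set X ⊆ V(G−W−e) such that c_tc((G−W−e)−X) ≥ |X| + 1, where c_tc denotes the number of components that are triangular-cacti, then the toughness of G satisfies t(G) ≤ (n+k+4)/(k+3). -/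
open SimpleGraph

variable {α β : Type*}

section helpers

variable {γ δ : Type*}

private lemma aux_nonempty_of_card (h : 1 ≤ Nat.card γ) : Nonempty γ := by
  by_contra hne
  rw [not_nonempty_iff] at hne
  rw [Nat.card_eq_zero.mpr (Or.inl hne)] at h
  omega

private lemma compCount_eq_one_of_connected {H : SimpleGraph γ} (h : H.Connected) :
    compCount H = 1 := by
  rw [compCount, Nat.card_eq_one_iff_unique]
  refine ⟨⟨fun a b => ?_⟩, ⟨H.connectedComponentMk h.nonempty.some⟩⟩
  exact ConnectedComponent.ind₂ (fun x y =>
    ConnectedComponent.eq.mpr (h.preconnected x y)) a b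

private lemma connected_of_compCount_le_one [Finite γ] [Nonempty γ] {H : SimpleGraph γ}
    (h : compCount H ≤ 1) : H.Connected := by
  haveI : Nonempty H.ConnectedComponent := ⟨H.connectedComponentMk (Classical.arbitrary γ)⟩
  have hpos : 0 < compCount H := Nat.card_pos
  have h1 : compCount H = 1 := le_antisymm h hpos
  rw [compCount, Nat.card_eq_one_iff_unique] at h1
  haveI := h1.1
  rw [connected_iff]
  exact ⟨fun x y => ConnectedComponent.eq.mp (Subsingleton.elim _ _), ‹Nonempty γ›⟩

private lemma delVerts_adj {G : SimpleGraph γ} {S : Set γ} {x y : ↥(Sᶜ)} :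
    (G.delVerts S).Adj x y ↔ G.Adj x.1 y.1 := by
  simp [SimpleGraph.delVerts, SimpleGraph.induce]

/-- If a vertex `w` outside `S` is isolated-or-not matters: deleting one more vertex
decreases the number of components by at most one. -/
private lemma compCount_delVerts_insert [Finite γ] (G : SimpleGraph γ) {S : Set γ} {w : γ}
    (hw : w ∉ S) :
    compCount (G.delVerts S) ≤ compCount (G.delVerts (S ∪ {w})) + 1 := by
  classical
  haveI hf1 : Finite (G.delVerts (S ∪ {w})).ConnectedComponent := Quot.finite _
  haveI hf2 : Finite (G.delVerts S).ConnectedComponent := Quot.finite _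
  haveI := Fintype.ofFinite ((G.delVerts (S ∪ {w})).ConnectedComponent)
  haveI := Fintype.ofFinite ((G.delVerts S).ConnectedComponent)
  have hwc : w ∈ Sᶜ := hw
  let f : (G.delVerts (S ∪ {w})) →g (G.delVerts S) :=
    ⟨fun x => ⟨x.1, fun hx => x.2 (Set.mem_union_left _ hx)⟩, fun h => by
      rw [delVerts_adj] at *; exact h⟩
  have hsur : Function.Surjective
      (fun o : Option (G.delVerts (S ∪ {w})).ConnectedComponent =>
        o.elim ((G.delVerts S).connectedComponentMk ⟨w, hwc⟩) (ConnectedComponent.map f)) := by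
    intro c
    obtain ⟨y, rfl⟩ := c.exists_rep
    by_cases hy : y.1 = w
    · refine ⟨none, ?_⟩
      simp only [Option.elim]
      congr 1
      exact Subtype.ext hy.symm
    · have hy2 : y.1 ∈ (S ∪ {w})ᶜ := by
        intro hmem
        rcases hmem with h | h
        · exact y.2 h
        · exact hy h
      refine ⟨some ((G.delVerts (S ∪ {w})).connectedComponentMk ⟨y.1, hy2⟩), ?_⟩
      simp only [Option.elim, ConnectedComponent.map_mk]
      congr 1
  have := Nat.card_le_card_of_surjective _ hsur
  simpa [compCount, Nat.card_eq_fintype_card] using this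

/-- If the component of `w` is not a singleton, deleting `w` does not decrease the
number of components. -/
private lemma compCount_delVerts_insert_of_not_isolated [Finite γ] (G : SimpleGraph γ)
    {S : Set γ} {w : γ} (hw : w ∉ S)
    (hns : ((G.delVerts S).connectedComponentMk ⟨w, hw⟩).supp ≠ {⟨w, hw⟩}) :
    compCount (G.delVerts S) ≤ compCount (G.delVerts (S ∪ {w})) := by
  classical
  haveI hf1 : Finite (G.delVerts (S ∪ {w})).ConnectedComponent := Quot.finite _
  haveI hf2 : Finite (G.delVerts S).ConnectedComponent := Quot.finite _
  haveI := Fintype.ofFinite ((G.delVerts (S ∪ {w})).ConnectedComponent)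
  haveI := Fintype.ofFinite ((G.delVerts S).ConnectedComponent)
  have hwc : w ∈ Sᶜ := hw
  obtain ⟨z, hz1, hz2⟩ : ∃ z, z ∈ ((G.delVerts S).connectedComponentMk ⟨w, hwc⟩).supp ∧
      z ≠ ⟨w, hwc⟩ := by
    by_contra hcon
    push_neg at hcon
    refine hns ?_
    ext t
    simp only [Set.mem_singleton_iff]
    constructor
    · intro ht; exact hcon t ht
    · rintro rfl; exact (ConnectedComponent.mem_supp_iff _ _).mpr rfl
  let f : (G.delVerts (S ∪ {w})) →g (G.delVerts S) :=
    ⟨fun x => ⟨x.1, fun hx => x.2 (Set.mem_union_left _ hx)⟩, fun h => by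
      rw [delVerts_adj] at *; exact h⟩
  have hsur : Function.Surjective (ConnectedComponent.map f) := by
    intro c
    obtain ⟨y, rfl⟩ := c.exists_rep
    by_cases hy : y.1 = w
    · have hzS : z.1 ∈ (S ∪ {w})ᶜ := by
        intro hmem
        rcases hmem with h | h
        · exact z.2 h
        · exact hz2 (Subtype.ext h)
      refine ⟨(G.delVerts (S ∪ {w})).connectedComponentMk ⟨z.1, hzS⟩, ?_⟩
      rw [ConnectedComponent.map_mk]
      have hy' : y = ⟨w, hwc⟩ := Subtype.ext hy
      have := (ConnectedComponent.mem_supp_iff _ _).mp hz1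
      calc (G.delVerts S).connectedComponentMk (f ⟨z.1, hzS⟩)
          = (G.delVerts S).connectedComponentMk z := by congr 1
        _ = (G.delVerts S).connectedComponentMk ⟨w, hwc⟩ := this
        _ = (G.delVerts S).connectedComponentMk y := by rw [hy']
    · have hy2 : y.1 ∈ (S ∪ {w})ᶜ := by
        intro hmem
        rcases hmem with h | h
        · exact y.2 h
        · exact hy h
      refine ⟨(G.delVerts (S ∪ {w})).connectedComponentMk ⟨y.1, hy2⟩, ?_⟩
      rw [ConnectedComponent.map_mk]
      congr 1
  have := Nat.card_le_card_of_surjective _ hsur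
  simpa [compCount] using this

private lemma reachable_cases {A B : SimpleGraph γ} {a b : γ}
    (h : ∀ x y : γ, B.Adj x y → A.Adj x y ∨ s(x, y) = s(a, b)) {x y : γ}
    (hr : B.Reachable x y) :
    A.Reachable x y ∨ (A.Reachable x a ∧ A.Reachable b y) ∨
      (A.Reachable x b ∧ A.Reachable a y) := by
  obtain ⟨p⟩ := hr
  induction p with
  | nil => exact Or.inl (Reachable.refl _)
  | @cons x' z' y' hadj p ih =>
    rcases h _ _ hadj with hA | hS
    · rcases ih with h1 | ⟨h1, h2⟩ | ⟨h1, h2⟩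
      · exact Or.inl (hA.reachable.trans h1)
      · exact Or.inr (Or.inl ⟨hA.reachable.trans h1, h2⟩)
      · exact Or.inr (Or.inr ⟨hA.reachable.trans h1, h2⟩)
    · rcases Sym2.eq_iff.mp hS with ⟨rfl, rfl⟩ | ⟨rfl, rfl⟩
      · rcases ih with h1 | ⟨h1, h2⟩ | ⟨h1, h2⟩
        · exact Or.inr (Or.inl ⟨Reachable.refl _, h1⟩)
        · exact Or.inr (Or.inl ⟨Reachable.refl _, h2⟩)
        · exact Or.inl h2
      · rcases ih with h1 | ⟨h1, h2⟩ | ⟨h1, h2⟩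
        · exact Or.inr (Or.inr ⟨Reachable.refl _, h1⟩)
        · exact Or.inl h2
        · exact Or.inr (Or.inr ⟨Reachable.refl _, h2⟩)

private lemma compCount_le_add_one_of_le [Finite γ] {A B : SimpleGraph γ} (hle : A ≤ B)
    {a b : γ} (h : ∀ x y : γ, B.Adj x y → A.Adj x y ∨ s(x, y) = s(a, b)) :
    compCount A ≤ compCount B + 1 := by
  classical
  haveI := Fintype.ofFinite γ
  haveI : Finite A.ConnectedComponent := Quot.finite _
  haveI : Finite B.ConnectedComponent := Quot.finite _
  haveI := Fintype.ofFinite A.ConnectedComponent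
  set t := A.connectedComponentMk b with ht
  have h1 : compCount A ≤ Nat.card {c : A.ConnectedComponent // c ≠ t} + 1 := by
    have hsur : Function.Surjective
        (fun o : Option {c : A.ConnectedComponent // c ≠ t} => o.elim t Subtype.val) := by
      intro c
      by_cases hc : c = t
      · exact ⟨none, hc.symm⟩
      · exact ⟨some ⟨c, hc⟩, rfl⟩
    have := Nat.card_le_card_of_surjective _ hsur
    simpa [compCount, Nat.card_eq_fintype_card] using this
  have h2 : Nat.card {c : A.ConnectedComponent // c ≠ t} ≤ compCount B := by
    have hkey : ∀ u v : γ, A.connectedComponentMk u ≠ t → A.connectedComponentMk v ≠ t →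
        B.connectedComponentMk u = B.connectedComponentMk v →
        A.connectedComponentMk u = A.connectedComponentMk v := by
      intro u v hu hv huv
      rcases reachable_cases h (ConnectedComponent.eq.mp huv) with h' | ⟨hh1, hh2⟩ | ⟨hh1, hh2⟩
      · exact ConnectedComponent.eq.mpr h'
      · exact absurd (ConnectedComponent.eq.mpr hh2.symm) hv
      · exact absurd (ConnectedComponent.eq.mpr hh1) hu
    have hinj : Function.Injective
        (fun c : {c : A.ConnectedComponent // c ≠ t} =>
          ConnectedComponent.map (Hom.ofLE hle) c.1) := by
      rintro ⟨c1, hc1⟩ ⟨c2, hc2⟩ hcc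
      obtain ⟨u, rfl⟩ := c1.exists_rep
      obtain ⟨v, rfl⟩ := c2.exists_rep
      simp only [ConnectedComponent.map_mk] at hcc
      exact Subtype.ext (hkey u v hc1 hc2 hcc)
    exact Nat.card_le_card_of_injective _ hinj
  omega
private def isoCCEquiv {A : SimpleGraph γ} {B : SimpleGraph δ} (e : A ≃g B) :
    A.ConnectedComponent ≃ B.ConnectedComponent where
  toFun := ConnectedComponent.map e.toHom
  invFun := ConnectedComponent.map e.symm.toHom
  left_inv c := by
    obtain ⟨v, rfl⟩ := c.exists_rep
    exact congrArg A.connectedComponentMk (e.symm_apply_apply v)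
  right_inv c := by
    obtain ⟨v, rfl⟩ := c.exists_rep
    exact congrArg B.connectedComponentMk (e.apply_symm_apply v)

private lemma compCount_congr {A : SimpleGraph γ} {B : SimpleGraph δ} (e : A ≃g B) :
    compCount A = compCount B :=
  Nat.card_congr (isoCCEquiv e)

private lemma connected_congr {A : SimpleGraph γ} {B : SimpleGraph δ} (e : A ≃g B) :
    A.Connected ↔ B.Connected :=
  ⟨fun h => h.map e.toHom e.toEquiv.surjective, fun h => h.map e.symm.toHom e.symm.toEquiv.surjective⟩

private noncomputable def induceInduceIso (H : SimpleGraph γ) (T : Set γ) (U : Set ↥T) :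
    (H.induce T).induce U ≃g H.induce (Subtype.val '' U) where
  toEquiv := Equiv.Set.image Subtype.val U Subtype.val_injective
  map_rel_iff' := by
    intro x y
    simp only [Equiv.Set.image, Equiv.Set.imageOfInjOn, Equiv.coe_fn_mk, comap_adj,
      Function.Embedding.coe_subtype, SimpleGraph.induce]

private lemma delVerts_deleteEdges_eq (G : SimpleGraph γ) {u v : γ} {S : Set γ}
    (h : u ∈ S ∨ v ∈ S) : (G.deleteEdges {s(u, v)}).delVerts S = G.delVerts S := by
  ext x y
  simp only [SimpleGraph.delVerts, SimpleGraph.induce, comap_adj, Function.Embedding.coe_subtype,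
    deleteEdges_adj, Set.mem_singleton_iff]
  constructor
  · rintro ⟨h1, _⟩; exact h1
  · intro h1
    refine ⟨h1, fun hs => ?_⟩
    rcases Sym2.eq_iff.mp hs with ⟨hx, hy⟩ | ⟨hx, hy⟩ <;>
      rcases h with h | h
    · exact x.2 (hx ▸ h)
    · exact y.2 (hy ▸ h)
    · exact y.2 (hy ▸ h)
    · exact x.2 (hx ▸ h)

private lemma reachable_ne_adj {H : SimpleGraph γ} {a c : γ} (h : H.Reachable a c)
    (hne : a ≠ c) : ∃ z, H.Adj a z := by
  obtain ⟨p⟩ := h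
  cases p with
  | nil => exact absurd rfl hne
  | cons hadj _ => exact ⟨_, hadj⟩

private lemma image_val_compl_singleton {T : Set γ} (z : ↥T) :
    Subtype.val '' ({z}ᶜ : Set ↥T) = T \ {z.1} := by
  ext y
  constructor
  · rintro ⟨a, ha, rfl⟩
    exact ⟨a.2, fun hh => ha (Subtype.ext hh)⟩
  · rintro ⟨hyT, hyz⟩
    exact ⟨⟨y, hyT⟩, fun hh => hyz (congrArg Subtype.val hh), rfl⟩

private lemma mindeg {V : Type*} [Fintype V] {G : SimpleGraph V} {m : ℕ}
    (hconn : IsMConnected G m) (w : V) : m ≤ (G.neighborSet w).ncard := by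
  classical
  by_contra hlt
  push_neg at hlt
  have hcon := hconn.2 _ hlt
  have hw : w ∈ (G.neighborSet w)ᶜ := by simp
  have hcard2 : 2 ≤ Nat.card ↥(G.neighborSet w)ᶜ := by
    have h1 := Set.ncard_add_ncard_compl (G.neighborSet w)
    have h2 := hconn.1
    rw [Nat.card_coe_set_eq]
    omega
  haveI : Nontrivial ↥(G.neighborSet w)ᶜ :=
    Finite.one_lt_card_iff_nontrivial.mp (by omega)
  obtain ⟨y, hy⟩ := exists_ne (⟨w, hw⟩ : ↥(G.neighborSet w)ᶜ)
  obtain ⟨z, hz⟩ := reachable_ne_adj (hcon.preconnected ⟨w, hw⟩ y) (fun hh => hy hh.symm)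
  rw [delVerts_adj] at hz
  exact z.2 hz

private lemma ncard_ge_of_two_le_compCount {V : Type*} [Fintype V] {G : SimpleGraph V} {m : ℕ}
    (hconn : IsMConnected G m) {S : Set V} (h2 : 2 ≤ compCount (G.delVerts S)) :
    m ≤ S.ncard := by
  by_contra hlt
  push_neg at hlt
  have := compCount_eq_one_of_connected (hconn.2 S hlt)
  omega

private lemma core {V : Type*} [Fintype V] (G' : SimpleGraph V) (S₀ : Set V)
    (h4 : 4 ≤ Nat.card ↥(S₀ᶜ))
    (hc : (G'.delVerts S₀).Connected)
    (hz : ∀ w ∉ S₀, (G'.delVerts (S₀ ∪ {w})).Connected)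
    (htc : IsTriangularCactus ((G'.delVerts S₀).induce Set.univ)) : False := by
  classical
  rcases htc.2 with ⟨v0, hv0⟩ | hblocks
  · haveI : Nontrivial ↥(S₀ᶜ) := Finite.one_lt_card_iff_nontrivial.mp (by omega)
    obtain ⟨a, b, hab⟩ := exists_pair_ne ↥(S₀ᶜ)
    apply hab
    have h1 := hv0 ⟨a, trivial⟩
    have h2 := hv0 ⟨b, trivial⟩
    have : (⟨a, trivial⟩ : ↥(Set.univ : Set ↥(S₀ᶜ))) = ⟨b, trivial⟩ := h1.trans h2.symm
    exact congrArg Subtype.val this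
  · have hblock : IsBlock ((G'.delVerts S₀).induce Set.univ) Set.univ := by
      constructor
      · constructor
        · rw [connected_congr (induceUnivIso _)]
          rw [connected_congr (induceUnivIso _)]
          exact hc
        · intro v' _
          right
          rw [← Set.compl_eq_univ_diff]
          rw [connected_congr (induceInduceIso _ _ _)]
          rw [image_val_compl_singleton]
          rw [← Set.compl_eq_univ_diff]
          have heq : (G'.delVerts S₀).induce ({v'.1}ᶜ : Set ↥(S₀ᶜ)) =
              (G'.induce S₀ᶜ).induce ({v'.1}ᶜ : Set ↥(S₀ᶜ)) := rfl
          rw [heq]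
          rw [connected_congr (induceInduceIso _ _ _)]
          rw [image_val_compl_singleton]
          rw [show (S₀ᶜ \ {v'.1.1} : Set V) = ((S₀ ∪ {v'.1.1})ᶜ : Set V) by
            rw [Set.compl_union, Set.diff_eq]]
          exact hz v'.1.1 v'.1.2
      · intro C hC _
        exact (Set.eq_univ_of_univ_subset hC).symm
    obtain ⟨e3⟩ := hblocks Set.univ hblock
    have hcard3 := Nat.card_congr e3.toEquiv
    have huniv1 : Nat.card ↥(Set.univ : Set ↥(Set.univ : Set ↥(S₀ᶜ))) =
        Nat.card ↥(Set.univ : Set ↥(S₀ᶜ)) := Nat.card_congr (Equiv.Set.univ _)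
    have huniv2 : Nat.card ↥(Set.univ : Set ↥(S₀ᶜ)) = Nat.card ↥(S₀ᶜ) :=
      Nat.card_congr (Equiv.Set.univ _)
    rw [huniv1, huniv2] at hcard3
    simp only [Nat.card_eq_fintype_card, Fintype.card_fin] at hcard3
    rw [← Nat.card_eq_fintype_card] at hcard3
    omega

end helpers

/-- With `G` an `(n+k+3)`-connected non-complete graph: if some `W`
with `|W| = n`, some edge `e = uv` of `G−W` and some `X ⊆ V(G−W−e)` satisfy
`c_tc((G−W−e)−X) ≥ |X| + 1`, then the toughness of `G` is at most `(n+k+4)/(k+3)`. -/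
theorem statement8 {V : Type*} [Fintype V] (n k : ℕ) (G : SimpleGraph V)
    (hconn : IsMConnected G (n + k + 3)) (hnc : G ≠ ⊤)
    (hex : ∃ (W : Set V) (u v : V) (X : Set V), W.ncard = n ∧ u ∉ W ∧ v ∉ W ∧
      G.Adj u v ∧ Disjoint X W ∧
      X.ncard + 1 ≤ ctcCount ((G.deleteEdges {s(u, v)}).delVerts (W ∪ X))) :
    ∃ S : Set V, 2 ≤ compCount (G.delVerts S) ∧
      (S.ncard : ℝ) / (compCount (G.delVerts S) : ℝ) ≤
        ((n : ℝ) + k + 4) / ((k : ℝ) + 3) := by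
  classical
  obtain ⟨W, u, v, X, hW, huW, hvW, huv, hdisj, hctc⟩ := hex
  set x := X.ncard with hx
  set S₀ : Set V := W ∪ X with hS₀
  set Ge : SimpleGraph V := G.deleteEdges {s(u, v)} with hGe
  set H₀ : SimpleGraph ↥(S₀ᶜ) := Ge.delVerts S₀ with hH₀
  haveI : Finite H₀.ConnectedComponent := Quot.finite _
  have hune : u ≠ v := G.ne_of_adj huv
  have hS₀card : S₀.ncard = n + x := by
    rw [hS₀, Set.ncard_union_eq hdisj.symm (Set.toFinite _) (Set.toFinite _), hW]
  have hL1 : ctcCount H₀ ≤ compCount H₀ :=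
    Nat.card_le_card_of_injective Subtype.val Subtype.val_injective
  have hNx : x + 1 ≤ compCount H₀ := le_trans hctc hL1
  have hVcard : n + k + 3 < Nat.card V := hconn.1
  have hcardc : S₀.ncard + Nat.card ↥(S₀ᶜ) = Nat.card V := by
    rw [Nat.card_coe_set_eq]
    exact Set.ncard_add_ncard_compl S₀
  have hc0N : compCount H₀ ≤ compCount (G.delVerts S₀) + 1 := by
    by_cases hmem : u ∈ S₀ ∨ v ∈ S₀
    · rw [hH₀, hGe, delVerts_deleteEdges_eq G hmem]
      exact Nat.le_succ _
    · push_neg at hmem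
      refine compCount_le_add_one_of_le (a := ⟨u, hmem.1⟩) (b := ⟨v, hmem.2⟩) ?_ ?_
      · intro a b hab
        rw [delVerts_adj] at *
        rw [hGe, deleteEdges_adj] at hab
        exact hab.1
      · intro a b hab
        rw [delVerts_adj] at hab
        by_cases hsym : s(a.1, b.1) = s(u, v)
        · right
          rcases Sym2.eq_iff.mp hsym with ⟨h1, h2⟩ | ⟨h1, h2⟩
          · rw [show a = (⟨u, hmem.1⟩ : ↥(S₀ᶜ)) from Subtype.ext h1,
              show b = (⟨v, hmem.2⟩ : ↥(S₀ᶜ)) from Subtype.ext h2]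
          · rw [show a = (⟨v, hmem.2⟩ : ↥(S₀ᶜ)) from Subtype.ext h1,
              show b = (⟨u, hmem.1⟩ : ↥(S₀ᶜ)) from Subtype.ext h2]
            exact Sym2.eq_swap
        · left
          rw [delVerts_adj, hGe, deleteEdges_adj]
          exact ⟨hab, by simpa using hsym⟩
  by_cases h2 : 2 ≤ compCount (G.delVerts S₀)
  · -- main case : S₀ is a big enough cut
    refine ⟨S₀, h2, ?_⟩
    have hge : n + k + 3 ≤ S₀.ncard := ncard_ge_of_two_le_compCount hconn h2
    have hxk : k + 3 ≤ x := by omega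
    have hcx : x ≤ compCount (G.delVerts S₀) := by omega
    have hnat : S₀.ncard * (k + 3) ≤ (n + k + 4) * compCount (G.delVerts S₀) := by
      rw [hS₀card]
      nlinarith
    have hcpos : (0 : ℝ) < (compCount (G.delVerts S₀) : ℝ) := by
      have : 0 < compCount (G.delVerts S₀) := by omega
      exact_mod_cast this
    rw [div_le_div_iff₀ hcpos (by positivity)]
    have : ((S₀.ncard : ℝ)) * ((k : ℝ) + 3) = ((S₀.ncard * (k + 3) : ℕ) : ℝ) := by push_cast; ring
    rw [this]
    have h4 : ((n : ℝ) + k + 4) * (compCount (G.delVerts S₀) : ℝ)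
        = (((n + k + 4) * compCount (G.delVerts S₀) : ℕ) : ℝ) := by push_cast; ring
    rw [h4]
    exact_mod_cast hnat
  · exfalso
    push_neg at h2
    have hc0 : compCount (G.delVerts S₀) ≤ 1 := by omega
    have hN2 : compCount H₀ ≤ 2 := by omega
    have hx1 : x ≤ 1 := by omega
    have huS : u ∉ S₀ := by
      intro hu
      have hXu : u ∈ X := by
        rcases hu with h | h
        · exact absurd h huW
        · exact h
      have hxpos : 0 < x := by
        rw [hx]
        exact (Set.ncard_pos (Set.toFinite _)).mpr ⟨u, hXu⟩
      have heq : H₀ = G.delVerts S₀ := by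
        rw [hH₀, hGe]; exact delVerts_deleteEdges_eq G (Or.inl hu)
      rw [heq] at hNx
      omega
    have hvS : v ∉ S₀ := by
      intro hv
      have hXv : v ∈ X := by
        rcases hv with h | h
        · exact absurd h hvW
        · exact h
      have hxpos : 0 < x := by
        rw [hx]
        exact (Set.ncard_pos (Set.toFinite _)).mpr ⟨v, hXv⟩
      have heq : H₀ = G.delVerts S₀ := by
        rw [hH₀, hGe]; exact delVerts_deleteEdges_eq G (Or.inr hv)
      rw [heq] at hNx
      omega
    have hc1u : compCount (G.delVerts (S₀ ∪ {u})) ≤ 1 := by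
      by_contra hcc
      push_neg at hcc
      have hge := ncard_ge_of_two_le_compCount hconn (by omega : 2 ≤ compCount (G.delVerts (S₀ ∪ {u})))
      have hle : (S₀ ∪ {u}).ncard ≤ n + x + 1 := by
        rw [Set.union_singleton]
        calc (insert u S₀).ncard ≤ S₀.ncard + 1 := Set.ncard_insert_le _ _
          _ = n + x + 1 := by omega
      omega
    have hc1v : compCount (G.delVerts (S₀ ∪ {v})) ≤ 1 := by
      by_contra hcc
      push_neg at hcc
      have hge := ncard_ge_of_two_le_compCount hconn (by omega : 2 ≤ compCount (G.delVerts (S₀ ∪ {v})))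
      have hle : (S₀ ∪ {v}).ncard ≤ n + x + 1 := by
        rw [Set.union_singleton]
        calc (insert v S₀).ncard ≤ S₀.ncard + 1 := Set.ncard_insert_le _ _
          _ = n + x + 1 := by omega
      omega
    have hNcases : compCount H₀ = 1 ∨ compCount H₀ = 2 := by omega
    rcases hNcases with hN1 | hN2'
    · -- N = 1 : the whole remainder is one triangular cactus
      have hx0 : x = 0 := by omega
      have hnect : Nonempty {c : H₀.ConnectedComponent //
          IsTriangularCactus (H₀.induce c.supp)} := by
        apply aux_nonempty_of_card
        have : (1 : ℕ) ≤ ctcCount H₀ := by omega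
        exact this
      obtain ⟨⟨c0, hc0tc⟩⟩ := hnect
      have hsupp : c0.supp = Set.univ := by
        have h1 : Nat.card H₀.ConnectedComponent = 1 := hN1
        rw [Nat.card_eq_one_iff_unique] at h1
        haveI := h1.1
        ext y
        simp only [Set.mem_univ, iff_true, ConnectedComponent.mem_supp_iff]
        exact Subsingleton.elim _ _
      rw [hsupp] at hc0tc
      have h4c : 4 ≤ Nat.card ↥(S₀ᶜ) := by omega
      refine core Ge S₀ h4c ?_ ?_ hc0tc
      · haveI : Nonempty ↥(S₀ᶜ) := aux_nonempty_of_card (by omega)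
        exact connected_of_compCount_le_one (by rw [← hH₀]; omega : compCount (Ge.delVerts S₀) ≤ 1)
      · intro w hwS
        by_cases hwu : w = u
        · subst hwu
          rw [show Ge.delVerts (S₀ ∪ {w}) = G.delVerts (S₀ ∪ {w}) by
            rw [hGe]; exact delVerts_deleteEdges_eq G (Or.inl (Set.mem_union_right _ rfl))]
          apply hconn.2
          rw [Set.union_singleton]
          calc (insert w S₀).ncard ≤ S₀.ncard + 1 := Set.ncard_insert_le _ _
            _ < n + k + 3 := by omega
        by_cases hwv : w = v
        · subst hwv
          rw [show Ge.delVerts (S₀ ∪ {w}) = G.delVerts (S₀ ∪ {w}) by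
            rw [hGe]; exact delVerts_deleteEdges_eq G (Or.inr (Set.mem_union_right _ rfl))]
          apply hconn.2
          rw [Set.union_singleton]
          calc (insert w S₀).ncard ≤ S₀.ncard + 1 := Set.ncard_insert_le _ _
            _ < n + k + 3 := by omega
        -- generic w
        have hcard1 : (S₀ ∪ {w}).ncard ≤ n + 1 := by
          rw [Set.union_singleton]
          calc (insert w S₀).ncard ≤ S₀.ncard + 1 := Set.ncard_insert_le _ _
            _ = n + 1 := by omega
        have hcard2 : (S₀ ∪ {w}).ncard + Nat.card ↥((S₀ ∪ {w})ᶜ) = Nat.card V := by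
          rw [Nat.card_coe_set_eq]
          exact Set.ncard_add_ncard_compl _
        haveI : Nonempty ↥((S₀ ∪ {w})ᶜ) := aux_nonempty_of_card (by omega)
        apply connected_of_compCount_le_one
        by_contra hcc
        push_neg at hcc
        have hu1 : u ∉ S₀ ∪ {w} := by
          rintro (h | h)
          · exact huS h
          · exact hwu (by simpa using h.symm)
        have hucard : (S₀ ∪ {w} ∪ {u}).ncard ≤ n + 2 := by
          rw [Set.union_singleton]
          calc (insert u (S₀ ∪ {w})).ncard ≤ (S₀ ∪ {w}).ncard + 1 := Set.ncard_insert_le _ _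
            _ ≤ n + 2 := by omega
        have hconn2 : (G.delVerts (S₀ ∪ {w} ∪ {u})).Connected :=
          hconn.2 _ (by omega)
        have h1 : compCount (Ge.delVerts (S₀ ∪ {w} ∪ {u})) = 1 := by
          rw [show Ge.delVerts (S₀ ∪ {w} ∪ {u}) = G.delVerts (S₀ ∪ {w} ∪ {u}) by
            rw [hGe]; exact delVerts_deleteEdges_eq G (Or.inl (Set.mem_union_right _ rfl))]
          exact compCount_eq_one_of_connected hconn2
        have hsing : ((Ge.delVerts (S₀ ∪ {w})).connectedComponentMk ⟨u, hu1⟩).supp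
            = {⟨u, hu1⟩} := by
          by_contra hns
          have := compCount_delVerts_insert_of_not_isolated Ge hu1 hns
          omega
        have hsub : G.neighborSet u ⊆ S₀ ∪ {w} ∪ {v} := by
          intro y hy
          by_contra hyn
          have hyS : y ∉ S₀ ∪ {w} := fun hh => hyn (Set.mem_union_left _ hh)
          have hyv : y ≠ v := fun hh => hyn (Set.mem_union_right _ (by simp [hh]))
          have hadj : (Ge.delVerts (S₀ ∪ {w})).Adj ⟨u, hu1⟩ ⟨y, hyS⟩ := by
            rw [delVerts_adj, hGe, deleteEdges_adj]
            refine ⟨hy, ?_⟩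
            simp only [Set.mem_singleton_iff]
            intro hss
            rcases Sym2.eq_iff.mp hss with ⟨h1', h2'⟩ | ⟨h1', h2'⟩
            · exact hyv h2'
            · exact hune h1'
          have hmem : (⟨y, hyS⟩ : ↥((S₀ ∪ {w})ᶜ)) ∈
              ((Ge.delVerts (S₀ ∪ {w})).connectedComponentMk ⟨u, hu1⟩).supp :=
            (ConnectedComponent.mem_supp_iff _ _).mpr
              (ConnectedComponent.eq.mpr hadj.symm.reachable)
          rw [hsing] at hmem
          have : y = u := by simpa using congrArg Subtype.val hmem
          exact G.ne_of_adj hy this.symm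
        have hdeg : (G.neighborSet u).ncard ≤ n + 2 := by
          calc (G.neighborSet u).ncard ≤ (S₀ ∪ {w} ∪ {v}).ncard :=
              Set.ncard_le_ncard hsub (Set.toFinite _)
            _ ≤ (S₀ ∪ {w}).ncard + 1 := by
              rw [Set.union_singleton (a := v)]; exact Set.ncard_insert_le _ _
            _ ≤ n + 2 := by omega
        have := mindeg hconn u
        omega
    · -- N = 2 : both endpoints are singleton components
      have hsingu : ((Ge.delVerts S₀).connectedComponentMk ⟨u, huS⟩).supp = {⟨u, huS⟩} := by
        by_contra hns
        have hle := compCount_delVerts_insert_of_not_isolated Ge huS hns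
        have heq : Ge.delVerts (S₀ ∪ {u}) = G.delVerts (S₀ ∪ {u}) := by
          rw [hGe]; exact delVerts_deleteEdges_eq G (Or.inl (Set.mem_union_right _ rfl))
        rw [heq, ← hH₀] at hle
        omega
      have hsingv : ((Ge.delVerts S₀).connectedComponentMk ⟨v, hvS⟩).supp = {⟨v, hvS⟩} := by
        by_contra hns
        have hle := compCount_delVerts_insert_of_not_isolated Ge hvS hns
        have heq : Ge.delVerts (S₀ ∪ {v}) = G.delVerts (S₀ ∪ {v}) := by
          rw [hGe]; exact delVerts_deleteEdges_eq G (Or.inr (Set.mem_union_right _ rfl))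
        rw [heq, ← hH₀] at hle
        omega
      have hccne : (Ge.delVerts S₀).connectedComponentMk ⟨u, huS⟩ ≠
          (Ge.delVerts S₀).connectedComponentMk ⟨v, hvS⟩ := by
        intro hh
        have : (⟨v, hvS⟩ : ↥(S₀ᶜ)) ∈
            ((Ge.delVerts S₀).connectedComponentMk ⟨u, huS⟩).supp :=
          (ConnectedComponent.mem_supp_iff _ _).mpr hh.symm
        rw [hsingu] at this
        have hveq : v = u := congrArg Subtype.val this
        exact hune hveq.symm
      have hall : ∀ y : ↥(S₀ᶜ), y = ⟨u, huS⟩ ∨ y = ⟨v, hvS⟩ := by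
        intro y
        by_contra hcon
        push_neg at hcon
        have hyu : (Ge.delVerts S₀).connectedComponentMk y ≠
            (Ge.delVerts S₀).connectedComponentMk ⟨u, huS⟩ := by
          intro hh
          have hmem : y ∈ ((Ge.delVerts S₀).connectedComponentMk ⟨u, huS⟩).supp :=
            (ConnectedComponent.mem_supp_iff _ _).mpr hh
          rw [hsingu] at hmem
          exact hcon.1 hmem
        have hyv : (Ge.delVerts S₀).connectedComponentMk y ≠
            (Ge.delVerts S₀).connectedComponentMk ⟨v, hvS⟩ := by
          intro hh
          have hmem : y ∈ ((Ge.delVerts S₀).connectedComponentMk ⟨v, hvS⟩).supp :=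
            (ConnectedComponent.mem_supp_iff _ _).mpr hh
          rw [hsingv] at hmem
          exact hcon.2 hmem
        haveI := Fintype.ofFinite H₀.ConnectedComponent
        have h3 : 3 ≤ compCount H₀ := by
          have hsub : ({(Ge.delVerts S₀).connectedComponentMk y,
              (Ge.delVerts S₀).connectedComponentMk ⟨u, huS⟩,
              (Ge.delVerts S₀).connectedComponentMk ⟨v, hvS⟩} : Finset H₀.ConnectedComponent).card = 3 := by
            rw [Finset.card_insert_of_notMem (by simp [hyu, hyv]),
              Finset.card_insert_of_notMem (by simp [hccne]), Finset.card_singleton]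
          have hle3 : (3 : ℕ) ≤ Fintype.card H₀.ConnectedComponent := by
            rw [← hsub]; exact Finset.card_le_univ _
          simpa [compCount, Nat.card_eq_fintype_card] using hle3
        omega
      have hcle : Nat.card ↥(S₀ᶜ) ≤ 2 := by
        have huvne : (⟨v, hvS⟩ : ↥(S₀ᶜ)) ≠ ⟨u, huS⟩ := fun hh => by
          have hveq : v = u := congrArg Subtype.val hh
          exact hune hveq.symm
        have hinj : Function.Injective (fun y : ↥(S₀ᶜ) =>
            (if y = ⟨u, huS⟩ then 0 else 1 : Fin 2)) := by
          intro y1 y2 h12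
          rcases hall y1 with h1 | h1 <;> rcases hall y2 with hh2 | hh2
          · rw [h1, hh2]
          · exfalso; rw [h1, hh2] at h12; simp [huvne] at h12
          · exfalso; rw [h1, hh2] at h12; simp [huvne] at h12
          · rw [h1, hh2]
        have := Nat.card_le_card_of_injective _ hinj
        simpa [Nat.card_eq_fintype_card] using this
      omega
end

section
/- Let n and k be nonnegative integers with n ≥ k+1, and let G = K_{n+k+3} + ((k+2)K₁ ∪ K₂) be the join of the complete graph on n+k+3 vertices with the disjoint union of k+2 isolated vertices and a single edge K₂. Then G is (n+k+3)-connected and its isolated toughness satisfies I(G) = (n+k+4)/(k+3). -/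
open SimpleGraph

variable {α β : Type*}

/-- The disjoint union of `m` triangles `K₃`. -/
def trianglesGraph (m : ℕ) : SimpleGraph (Fin m × Fin 3) where
  Adj p q := p.1 = q.1 ∧ p.2 ≠ q.2
  symm := ⟨fun _ _ h => ⟨h.1.symm, fun hh => h.2 hh.symm⟩⟩
  loopless := ⟨fun _ h => h.2 rfl⟩

/-- The graph `K_{n+k+3} + ((k+2)K₁ ∪ K₂)`. -/
def exampleGraph1 (n k : ℕ) :
    SimpleGraph (Fin (n + k + 3) ⊕ (Fin (k + 2) ⊕ Fin 2)) :=
  (⊤ : SimpleGraph (Fin (n + k + 3))).join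
    ((⊥ : SimpleGraph (Fin (k + 2))) ⊕g (⊤ : SimpleGraph (Fin 2)))

/-- The graph `K_{n+k+3} + ((k+2)K₃ ∪ K₂)`. -/
def exampleGraph2 (n k : ℕ) :
    SimpleGraph (Fin (n + k + 3) ⊕ ((Fin (k + 2) × Fin 3) ⊕ Fin 2)) :=
  (⊤ : SimpleGraph (Fin (n + k + 3))).join
    (trianglesGraph (k + 2) ⊕g (⊤ : SimpleGraph (Fin 2)))

/-- The graph `K_{n+k+2} + ((k+1)K₁ ∪ K₂)`. -/
def exampleGraph3 (n k : ℕ) :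
    SimpleGraph (Fin (n + k + 2) ⊕ (Fin (k + 1) ⊕ Fin 2)) :=
  (⊤ : SimpleGraph (Fin (n + k + 2))).join
    ((⊥ : SimpleGraph (Fin (k + 1))) ⊕g (⊤ : SimpleGraph (Fin 2)))

-- my aux
lemma isoCount_delVerts (G : SimpleGraph α) (S : Set α) :
    isoCount (G.delVerts S) = {v : α | v ∉ S ∧ ∀ w ∉ S, ¬ G.Adj v w}.ncard := by
  rw [isoCount, ← Nat.card_coe_set_eq]
  refine Nat.card_congr ⟨fun x => ⟨x.1.1, x.1.2, fun w hw hadj => x.2 ⟨w, hw⟩ hadj⟩,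
    fun x => ⟨⟨x.1, x.2.1⟩, fun w hadj => x.2.2 w.1 w.2 hadj⟩, fun _ => rfl, fun _ => rfl⟩

lemma ex1_adj (n k : ℕ) (u v : Fin (n + k + 3) ⊕ (Fin (k + 2) ⊕ Fin 2)) :
    (exampleGraph1 n k).Adj u v ↔ (match u, v with
      | Sum.inl a, Sum.inl b => a ≠ b
      | Sum.inl _, Sum.inr _ => True
      | Sum.inr _, Sum.inl _ => True
      | Sum.inr (Sum.inr a), Sum.inr (Sum.inr b) => a ≠ b
      | Sum.inr _, Sum.inr _ => False) := by
  rcases u with a | (a | a) <;> rcases v with b | (b | b) <;>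
    simp [exampleGraph1, SimpleGraph.join, SimpleGraph.sum_adj]

lemma ncard_range_inrinl (n k : ℕ) :
    (Set.range (fun a : Fin (k+2) => Sum.inr (Sum.inl a) :
      Fin (k+2) → Fin (n+k+3) ⊕ (Fin (k+2) ⊕ Fin 2))).ncard = k + 2 := by
  rw [← Nat.card_coe_set_eq, Nat.card_range_of_injective (fun x y h => by simpa using h)]
  simp

lemma ncard_range_inl (m : ℕ) {γ : Type*} :
    (Set.range (Sum.inl : Fin m → Fin m ⊕ γ)).ncard = m := by
  rw [← Nat.card_coe_set_eq, Nat.card_range_of_injective Sum.inl_injective]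
  simp

/-- For `n ≥ k+1`, the graph `G = K_{n+k+3} + ((k+2)K₁ ∪ K₂)` is
`(n+k+3)`-connected and its isolated toughness equals `(n+k+4)/(k+3)`
(the minimum defining `I(G)` equals that value: every eligible set gives a ratio `≥`
the value, and some eligible set attains it). -/
theorem statement11 (n k : ℕ) (hnk : k + 1 ≤ n) :
    IsMConnected (exampleGraph1 n k) (n + k + 3) ∧
    (∀ S : Set (Fin (n + k + 3) ⊕ (Fin (k + 2) ⊕ Fin 2)),
      2 ≤ isoCount ((exampleGraph1 n k).delVerts S) →
      ((n : ℝ) + k + 4) / ((k : ℝ) + 3) ≤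
        (S.ncard : ℝ) / (isoCount ((exampleGraph1 n k).delVerts S) : ℝ)) ∧
    (∃ S : Set (Fin (n + k + 3) ⊕ (Fin (k + 2) ⊕ Fin 2)),
      2 ≤ isoCount ((exampleGraph1 n k).delVerts S) ∧
      (S.ncard : ℝ) / (isoCount ((exampleGraph1 n k).delVerts S) : ℝ) =
        ((n : ℝ) + k + 4) / ((k : ℝ) + 3)) := by
  refine ⟨⟨?_, ?_⟩, ?_, ?_⟩
  · -- card bound
    simp only [Nat.card_eq_fintype_card, Fintype.card_sum, Fintype.card_fin]
    omega
  · -- connectivity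
    intro S hS
    have ha : ∃ a : Fin (n + k + 3), Sum.inl a ∉ S := by
      by_contra h
      push_neg at h
      have hsub : Set.range (Sum.inl : Fin (n+k+3) → _) ⊆ S := by
        rintro _ ⟨a, rfl⟩; exact h a
      have := Set.ncard_le_ncard hsub (Set.toFinite S)
      rw [ncard_range_inl] at this
      omega
    obtain ⟨a, ha⟩ := ha
    have hac : Sum.inl a ∈ Sᶜ := ha
    have key : ∀ w : ↥(Sᶜ), ((exampleGraph1 n k).delVerts S).Reachable ⟨Sum.inl a, hac⟩ w := by
      rintro ⟨w, hw⟩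
      by_cases h : w = Sum.inl a
      · subst h; exact Reachable.refl _
      · refine Adj.reachable ?_
        show (exampleGraph1 n k).Adj (Sum.inl a) w
        rw [ex1_adj]
        rcases w with b | x
        · exact fun hab => h (by rw [hab])
        · trivial
    have : Nonempty ↥(Sᶜ) := ⟨⟨Sum.inl a, hac⟩⟩
    exact ⟨fun u v => (key u).symm.trans (key v)⟩
  · -- lower bound
    intro S hS
    rw [isoCount_delVerts] at hS ⊢
    set T := {v | v ∉ S ∧ ∀ w ∉ S, ¬ (exampleGraph1 n k).Adj v w} with hTdef
    have hnotl : ∀ a, Sum.inl a ∉ T := by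
      intro a hmem
      have hall : ∀ w, w ≠ Sum.inl a → w ∈ S := by
        intro w hw
        by_contra hwS
        refine hmem.2 w hwS ?_
        rw [ex1_adj]
        rcases w with b | x
        · exact fun hab => hw (by rw [hab])
        · trivial
      have hsub : T ⊆ {Sum.inl a} := by
        intro v hv
        by_contra hne
        exact hv.1 (hall v hne)
      have := Set.ncard_le_ncard hsub (Set.finite_singleton _)
      rw [Set.ncard_singleton] at this
      omega
    have hTne : T.Nonempty := by
      rcases Set.eq_empty_or_nonempty T with h | h
      · rw [h] at hS; simp at hS
      · exact h
    obtain ⟨v, hvT⟩ := hTne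
    have hleft : ∀ a, Sum.inl a ∈ S := by
      intro a
      by_contra h
      rcases v with b | x
      · exact hnotl b hvT
      · refine hvT.2 (Sum.inl a) h ?_
        rw [ex1_adj]; rcases x with y | y <;> trivial
    have hSleft : Set.range (Sum.inl : Fin (n+k+3) → _) ⊆ S := by
      rintro _ ⟨a, rfl⟩; exact hleft a
    have ht2 : ∀ b b' : Fin 2, Sum.inr (Sum.inr b) ∈ T → Sum.inr (Sum.inr b') ∈ T → b = b' := by
      intro b b' hb hb'
      by_contra hne
      refine hb.2 _ hb'.1 ?_
      rw [ex1_adj]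
      exact hne
    have hSn : n + k + 3 ≤ S.ncard := by
      have := Set.ncard_le_ncard hSleft (Set.toFinite S)
      rwa [ncard_range_inl] at this
    have key : (n + k + 4) * T.ncard ≤ S.ncard * (k + 3) := by
      by_cases hc : ∃ b : Fin 2, Sum.inr (Sum.inr b) ∈ T
      · obtain ⟨b, hb⟩ := hc
        -- other K2 vertex in S
        have hb' : Sum.inr (Sum.inr (b + 1)) ∈ S := by
          by_contra h
          refine hb.2 _ h ?_
          rw [ex1_adj]
          intro hh
          rw [Fin.ext_iff] at hh
          simp [Fin.add_def] at hh
          omega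
        have hSsub : Set.range (Sum.inl : Fin (n+k+3) → _) ∪ {Sum.inr (Sum.inr (b+1))} ⊆ S := by
          rw [Set.union_subset_iff]
          exact ⟨hSleft, by simpa using hb'⟩
        have hS4 : n + k + 4 ≤ S.ncard := by
          have h1 := Set.ncard_le_ncard hSsub (Set.toFinite S)
          rw [Set.ncard_union_eq (by simp [Set.disjoint_singleton_right])] at h1
          rw [ncard_range_inl] at h1
          simp at h1
          omega
        have hTsub : T ⊆ Set.range (fun a : Fin (k+2) => Sum.inr (Sum.inl a) :
            Fin (k+2) → Fin (n+k+3) ⊕ (Fin (k+2) ⊕ Fin 2)) ∪ {Sum.inr (Sum.inr b)} := by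
          rintro (c | (c | c)) hv
          · exact absurd hv (hnotl c)
          · exact Or.inl ⟨c, rfl⟩
          · exact Or.inr (by simp [ht2 c b hv hb])
        have hTcard : T.ncard ≤ k + 3 := by
          have h1 := Set.ncard_le_ncard hTsub (Set.toFinite _)
          have h2 := Set.ncard_union_le (Set.range (fun a : Fin (k+2) => Sum.inr (Sum.inl a) :
            Fin (k+2) → Fin (n+k+3) ⊕ (Fin (k+2) ⊕ Fin 2))) {Sum.inr (Sum.inr b)}
          rw [ncard_range_inrinl, Set.ncard_singleton] at h2
          omega
        nlinarith
      · push_neg at hc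
        have hTsub : T ⊆ Set.range (fun a : Fin (k+2) => Sum.inr (Sum.inl a) :
            Fin (k+2) → Fin (n+k+3) ⊕ (Fin (k+2) ⊕ Fin 2)) := by
          rintro (c | (c | c)) hv
          · exact absurd hv (hnotl c)
          · exact ⟨c, rfl⟩
          · exact absurd hv (hc c)
        have hTcard : T.ncard ≤ k + 2 := by
          have h1 := Set.ncard_le_ncard hTsub (Set.toFinite _)
          rw [ncard_range_inrinl] at h1
          exact h1
        nlinarith
    have hkpos : (0:ℝ) < (k:ℝ) + 3 := by positivity
    have hTpos : (0:ℝ) < (T.ncard : ℝ) := by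
      have : 0 < T.ncard := by omega
      exact_mod_cast this
    rw [div_le_div_iff₀ hkpos hTpos]
    have keyR : ((n:ℝ) + k + 4) * (T.ncard : ℝ) ≤ (S.ncard : ℝ) * ((k:ℝ) + 3) := by
      exact_mod_cast key
    linarith
  · -- attaining set
    refine ⟨Set.range (Sum.inl : Fin (n+k+3) → _) ∪ {Sum.inr (Sum.inr 0)}, ?_⟩
    set S : Set (Fin (n + k + 3) ⊕ (Fin (k + 2) ⊕ Fin 2)) :=
      Set.range Sum.inl ∪ {Sum.inr (Sum.inr 0)} with hSdef
    have hiso : {v | v ∉ S ∧ ∀ w ∉ S, ¬ (exampleGraph1 n k).Adj v w} =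
        Set.range (fun a : Fin (k+2) => Sum.inr (Sum.inl a) :
          Fin (k+2) → Fin (n+k+3) ⊕ (Fin (k+2) ⊕ Fin 2)) ∪ {Sum.inr (Sum.inr 1)} := by
      ext v
      constructor
      · rintro ⟨hv1, hv2⟩
        rcases v with a | (a | a)
        · exact absurd (Or.inl ⟨a, rfl⟩) hv1
        · exact Or.inl ⟨a, rfl⟩
        · right
          have ha : a ≠ 0 := by
            intro h; subst h; exact hv1 (Or.inr rfl)
          have : a = 1 := by omega
          simp [this]
      · rintro (⟨a, rfl⟩ | hv)
        · refine ⟨by simp [hSdef], ?_⟩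
          rintro (b | (b | b)) hw hadj
          · exact hw (Or.inl ⟨b, rfl⟩)
          · rw [ex1_adj] at hadj; exact hadj
          · rw [ex1_adj] at hadj; exact hadj
        · simp only [Set.mem_singleton_iff] at hv
          subst hv
          refine ⟨by simp [hSdef], ?_⟩
          rintro (b | (b | b)) hw hadj
          · exact hw (Or.inl ⟨b, rfl⟩)
          · rw [ex1_adj] at hadj; exact hadj
          · rw [ex1_adj] at hadj
            have : b = 0 := by omega
            subst this
            exact hw (Or.inr rfl)
    have hcard : isoCount ((exampleGraph1 n k).delVerts S) = k + 3 := by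
      rw [isoCount_delVerts, hiso, Set.ncard_union_eq (by simp [Set.disjoint_singleton_right])]
      rw [ncard_range_inrinl, Set.ncard_singleton]
    have hScard : S.ncard = n + k + 4 := by
      rw [hSdef, Set.ncard_union_eq (by simp [Set.disjoint_singleton_right]), ncard_range_inl]
      simp
    refine ⟨by omega, ?_⟩
    rw [hcard, hScard]
    push_cast
    ring_nf
end

section
/- Let n and k be nonnegative integers with n ≥ k+1, and let G = K_{n+k+3} + ((k+2)K₁ ∪ K₂) be the join of the complete graph on n+k+3 vertices with the disjoint union of k+2 isolated vertices and a single edge K₂. Then G is not a ({K₂,C},n)-factor critical avoidable graph: taking W to consist of n vertices of the K_{n+k+3} part and e the edge of the K₂ part, the graph G−W−e has no spanning subgraph each of whose components is an edge K₂ or a cycle. -/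
open SimpleGraph

variable {α β : Type*}

private lemma fin2_ne_add_one : ∀ a : Fin 2, a ≠ a + 1 := by decide

private lemma exists_next {V : Type*} (F : SimpleGraph V)
    (hF : ∀ c : F.ConnectedComponent,
      Nonempty ((F.induce c.supp) ≃g (⊤ : SimpleGraph (Fin 2))) ∨
      ∃ m : ℕ, 3 ≤ m ∧ Nonempty ((F.induce c.supp) ≃g cycleGraph m)) :
    ∃ g : V → V, Function.Injective g ∧ ∀ v, F.Adj v (g v) := by
  have hnx : ∀ c : F.ConnectedComponent, ∃ nx : c.supp → c.supp,
      Function.Injective nx ∧ ∀ x, F.Adj x.1 (nx x).1 := by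
    intro c
    obtain hne | ⟨m, hm, hne⟩ := hF c
    · obtain ⟨φ⟩ := hne
      refine ⟨fun x => φ.symm (φ x + 1), ?_, ?_⟩
      · intro x y hxy
        exact φ.injective (add_left_injective 1 (φ.symm.injective hxy))
      · intro x
        have hadj : (⊤ : SimpleGraph (Fin 2)).Adj (φ x) (φ (φ.symm (φ x + 1))) := by
          rw [RelIso.apply_symm_apply]
          exact (top_adj _ _).mpr (fin2_ne_add_one (φ x))
        have h2 : (F.induce c.supp).Adj x (φ.symm (φ x + 1)) := φ.map_adj_iff.mp hadj
        simpa [SimpleGraph.comap_adj] using h2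
    · obtain ⟨φ⟩ := hne
      obtain ⟨m', rfl⟩ : ∃ m', m = m' + 3 := ⟨m - 3, by omega⟩
      refine ⟨fun x => φ.symm (φ x + 1), ?_, ?_⟩
      · intro x y hxy
        exact φ.injective (add_left_injective 1 (φ.symm.injective hxy))
      · intro x
        have hadj : (cycleGraph (m' + 3)).Adj (φ x) (φ (φ.symm (φ x + 1))) := by
          rw [RelIso.apply_symm_apply]
          exact (cycleGraph_adj (n := m' + 1)).mpr (Or.inr (add_sub_cancel_left (φ x) 1))
        have h2 : (F.induce c.supp).Adj x (φ.symm (φ x + 1)) := φ.map_adj_iff.mp hadj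
        simpa [SimpleGraph.comap_adj] using h2
  choose nx hinj hadjx using hnx
  have hmem : ∀ v : V, v ∈ (F.connectedComponentMk v).supp :=
    fun v => (ConnectedComponent.mem_supp_iff _ _).mpr rfl
  refine ⟨fun v => (nx (F.connectedComponentMk v) ⟨v, hmem v⟩ : _),
    ?_, fun v => hadjx (F.connectedComponentMk v) ⟨v, hmem v⟩⟩
  intro v₁ v₂ h
  dsimp only at h
  have p1 := (ConnectedComponent.mem_supp_iff _ _).mp
    (Subtype.prop (nx (F.connectedComponentMk v₁) ⟨v₁, hmem v₁⟩))
  have p2 := (ConnectedComponent.mem_supp_iff _ _).mp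
    (Subtype.prop (nx (F.connectedComponentMk v₂) ⟨v₂, hmem v₂⟩))
  have e1 : F.connectedComponentMk v₁ = F.connectedComponentMk v₂ := by
    rw [← p1, ← p2, h]
  have key : ∀ (c c' : F.ConnectedComponent) (_ : c = c') (x : V) (hx : x ∈ c.supp)
      (hx' : x ∈ c'.supp), ((nx c ⟨x, hx⟩ : c.supp) : V) = ((nx c' ⟨x, hx'⟩ : c'.supp) : V) := by
    rintro c _ rfl x hx hx'; rfl
  have hmem2 : v₂ ∈ (F.connectedComponentMk v₁).supp :=
    (ConnectedComponent.mem_supp_iff _ _).mpr e1.symm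
  have h2 : ((nx (F.connectedComponentMk v₁) ⟨v₁, hmem v₁⟩ : _) : V)
      = ((nx (F.connectedComponentMk v₁) ⟨v₂, hmem2⟩ : _) : V) :=
    h.trans (key _ _ e1.symm v₂ (hmem v₂) hmem2)
  exact congrArg Subtype.val (hinj (F.connectedComponentMk v₁) (Subtype.ext h2))

private lemma fin2_pair : ∀ x y : Fin 2, x ≠ y → (x = 0 ∧ y = 1) ∨ (x = 1 ∧ y = 0) := by
  decide

/-- For `n ≥ k+1`, the graph `G = K_{n+k+3} + ((k+2)K₁ ∪ K₂)` is not
a `({K₂,C}, n)`-factor critical avoidable graph: for any `W` consisting of `n` vertices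
of the `K_{n+k+3}` part and `e` the edge of the `K₂` part, `G−W−e` has no
`{K₂,C}`-factor. -/
theorem statement12 (n k : ℕ) (hnk : k + 1 ≤ n) :
    (∀ W : Set (Fin (n + k + 3) ⊕ (Fin (k + 2) ⊕ Fin 2)),
      W ⊆ Set.range Sum.inl → W.ncard = n →
      ¬ HasK2CycleFactor (((exampleGraph1 n k).deleteEdges
        {s(Sum.inr (Sum.inr 0), Sum.inr (Sum.inr 1))}).delVerts W)) ∧
    ¬ K2CycleFactorCriticalAvoidable (exampleGraph1 n k) n := by
  have hr : (Set.range (Sum.inl : Fin (n + k + 3) → Fin (n + k + 3) ⊕ (Fin (k + 2) ⊕ Fin 2))).ncard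
      = n + k + 3 := by
    rw [← Nat.card_coe_set_eq, Nat.card_range_of_injective Sum.inl_injective]
    simp
  have main : ∀ W : Set (Fin (n + k + 3) ⊕ (Fin (k + 2) ⊕ Fin 2)),
      W ⊆ Set.range Sum.inl → W.ncard = n →
      ¬ HasK2CycleFactor (((exampleGraph1 n k).deleteEdges
        {s(Sum.inr (Sum.inr 0), Sum.inr (Sum.inr 1))}).delVerts W) := by
    intro W hWsub hWcard hfac
    obtain ⟨F, hFle, hFcomp⟩ := hfac
    obtain ⟨g, hginj, hgadj⟩ := exists_next F hFcomp
    have hind : ∀ (u v : ↥(Wᶜ)) (a b : Fin (k + 2) ⊕ Fin 2),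
        u.1 = Sum.inr a → v.1 = Sum.inr b → ¬ F.Adj u v := by
      intro u v a b ha hb hadj
      have h1 := hFle hadj
      have h2 : ((exampleGraph1 n k).deleteEdges
          {s(Sum.inr (Sum.inr 0), Sum.inr (Sum.inr 1))}).Adj u.1 v.1 := h1
      rw [SimpleGraph.deleteEdges_adj] at h2
      obtain ⟨h3, h4⟩ := h2
      rw [ha, hb] at h3 h4
      have h5 : ((⊥ : SimpleGraph (Fin (k + 2))) ⊕g (⊤ : SimpleGraph (Fin 2))).Adj a b := h3
      rcases a with x | x <;> rcases b with y | y
      · simp [SimpleGraph.sum_adj] at h5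
      · simp [SimpleGraph.sum_adj] at h5
      · simp [SimpleGraph.sum_adj] at h5
      · have hxy : x ≠ y := by simpa [SimpleGraph.sum_adj] using h5
        rcases fin2_pair x y hxy with ⟨rfl, rfl⟩ | ⟨rfl, rfl⟩
        · exact h4 rfl
        · exact h4 (Set.mem_singleton_iff.mpr (Sym2.eq_swap))
    have hmemW : ∀ b : Fin (k + 2) ⊕ Fin 2,
        (Sum.inr b : Fin (n + k + 3) ⊕ (Fin (k + 2) ⊕ Fin 2)) ∈ Wᶜ := by
      intro b
      simp only [Set.mem_compl_iff]
      intro hb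
      obtain ⟨a, ha⟩ := hWsub hb
      cases ha
    set fR : (Fin (k + 2) ⊕ Fin 2) → ↥(Wᶜ) := fun b => ⟨Sum.inr b, hmemW b⟩ with hfR
    have hleft : ∀ b, ∃ a, (g (fR b)).1 = Sum.inl a := by
      intro b
      rcases hx : (g (fR b)).1 with a | c
      · exact ⟨a, rfl⟩
      · exact absurd (hgadj (fR b)) (hind (fR b) (g (fR b)) b c rfl hx)
    have hinj2 : Function.Injective (fun b => (g (fR b)).1) := by
      intro b₁ b₂ h
      dsimp only at h
      have h1 : fR b₁ = fR b₂ := hginj (Subtype.ext h)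
      have h2 : (Sum.inr b₁ : Fin (n + k + 3) ⊕ (Fin (k + 2) ⊕ Fin 2)) = Sum.inr b₂ :=
        congrArg Subtype.val h1
      exact Sum.inr_injective h2
    set S := Set.range (Sum.inl : Fin (n + k + 3) → Fin (n + k + 3) ⊕ (Fin (k + 2) ⊕ Fin 2))
      with hS
    have h' : ∀ b : Fin (k + 2) ⊕ Fin 2, (g (fR b)).1 ∈ S \ W := by
      intro b
      exact ⟨⟨(hleft b).choose, (hleft b).choose_spec.symm⟩, (g (fR b)).2⟩
    have hcard := Nat.card_le_card_of_injective
      (fun b : Fin (k + 2) ⊕ Fin 2 => (⟨(g (fR b)).1, h' b⟩ : ↥(S \ W)))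
      (by
        intro b₁ b₂ h
        apply hinj2
        have h2 := congrArg Subtype.val h
        exact h2)
    rw [Nat.card_sum, Nat.card_coe_set_eq, Set.ncard_diff hWsub (Set.toFinite W),
      hr, hWcard] at hcard
    simp only [Nat.card_eq_fintype_card, Fintype.card_fin] at hcard
    omega
  refine ⟨main, fun hcrit => ?_⟩
  obtain ⟨W, hWsub, hWcard⟩ := Set.exists_subset_card_eq
    (s := Set.range (Sum.inl : Fin (n + k + 3) → Fin (n + k + 3) ⊕ (Fin (k + 2) ⊕ Fin 2)))
    (n := n) (by omega)
  have hnotW : ∀ b : Fin (k + 2) ⊕ Fin 2,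
      (Sum.inr b : Fin (n + k + 3) ⊕ (Fin (k + 2) ⊕ Fin 2)) ∉ W := by
    intro b hb
    obtain ⟨a, ha⟩ := hWsub hb
    cases ha
  have hadj : (exampleGraph1 n k).Adj (Sum.inr (Sum.inr 0)) (Sum.inr (Sum.inr 1)) := by
    show ((⊥ : SimpleGraph (Fin (k + 2))) ⊕g (⊤ : SimpleGraph (Fin 2))).Adj
      (Sum.inr 0) (Sum.inr 1)
    simp [SimpleGraph.sum_adj]
  exact main W hWsub hWcard (hcrit W hWcard _ _ (hnotW _) (hnotW _) hadj)
end

section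
/- Let n and k be nonnegative integers with n ≥ k+1, and let G = K_{n+k+2} + ((k+1)K₁ ∪ K₂) be the join of the complete graph on n+k+2 vertices with the disjoint union of k+1 isolated vertices and a single edge K₂. Then G is (n+k+2)-connected, its isolated toughness satisfies I(G) = (n+k+3)/(k+2) > (n+k+4)/(k+3), and G is not a ({K₂,C},n)-factor critical avoidable graph. -/
open SimpleGraph

variable {α β : Type*}

/-! ### Auxiliary lemmas -/

section AuxSucc

lemma succ_of_iso_top2 {V' : Type*} {G' : SimpleGraph V'} (φ : G' ≃g (⊤ : SimpleGraph (Fin 2))) :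
    ∃ σ : V' ≃ V', ∀ x, G'.Adj x (σ x) := by
  refine ⟨φ.toEquiv.trans ((Equiv.addRight (1 : Fin 2)).trans φ.toEquiv.symm), fun x => ?_⟩
  have : G'.Adj x (φ.symm (φ x + 1)) := by
    rw [← φ.map_adj_iff]
    simp only [RelIso.apply_symm_apply]
    show φ x ≠ φ x + 1
    generalize φ x = z; revert z; decide
  exact this

lemma succ_of_iso_cycle {m : ℕ} (hm : 3 ≤ m) {V' : Type*} {G' : SimpleGraph V'}
    (φ : G' ≃g cycleGraph m) : ∃ σ : V' ≃ V', ∀ x, G'.Adj x (σ x) := by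
  obtain ⟨p, rfl⟩ : ∃ p, m = p + 2 := ⟨m - 2, by omega⟩
  refine ⟨φ.toEquiv.trans ((Equiv.addRight (1 : Fin (p+2))).trans φ.toEquiv.symm), fun x => ?_⟩
  have : G'.Adj x (φ.symm (φ x + 1)) := by
    rw [← φ.map_adj_iff]
    simp only [RelIso.apply_symm_apply]
    rw [cycleGraph_adj]
    right; simp
  exact this

lemma exists_succ_perm {V : Type*} (F : SimpleGraph V)
    (hF : ∀ c : F.ConnectedComponent,
      Nonempty ((F.induce c.supp) ≃g (⊤ : SimpleGraph (Fin 2))) ∨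
      ∃ m : ℕ, 3 ≤ m ∧ Nonempty ((F.induce c.supp) ≃g cycleGraph m)) :
    ∃ g : V → V, Function.Injective g ∧ ∀ x, F.Adj x (g x) := by
  have key : ∀ c : F.ConnectedComponent, ∃ σ : c.supp ≃ c.supp,
      ∀ x : c.supp, (F.induce c.supp).Adj x (σ x) := by
    intro c
    rcases hF c with ⟨⟨φ⟩⟩ | ⟨m, hm, ⟨φ⟩⟩
    · exact succ_of_iso_top2 φ
    · exact succ_of_iso_cycle hm φ
  choose σ hσ using key
  classical
  set τ : F.ConnectedComponent → V → V := fun c x =>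
    if hx : x ∈ c.supp then (σ c ⟨x, hx⟩ : V) else x with hτ
  refine ⟨fun x => τ (F.connectedComponentMk x) x, ?_, ?_⟩
  · intro x y hxy
    dsimp only at hxy
    have hx : x ∈ (F.connectedComponentMk x).supp := rfl
    have hy : y ∈ (F.connectedComponentMk y).supp := rfl
    have hxv : τ (F.connectedComponentMk x) x = (σ _ ⟨x, hx⟩ : V) := by
      simp only [hτ, dif_pos hx]
    have hyv : τ (F.connectedComponentMk y) y = (σ _ ⟨y, hy⟩ : V) := by
      simp only [hτ, dif_pos hy]
    rw [hxv, hyv] at hxy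
    have hcc : F.connectedComponentMk x = F.connectedComponentMk y := by
      have h1 := (σ (F.connectedComponentMk x) ⟨x, hx⟩).2
      have h2 := (σ (F.connectedComponentMk y) ⟨y, hy⟩).2
      rw [SimpleGraph.ConnectedComponent.mem_supp_iff] at h1 h2
      rw [← h1, ← h2, hxy]
    have inj_c : ∀ (c : F.ConnectedComponent) (a b : V) (ha : a ∈ c.supp) (hb : b ∈ c.supp),
        (σ c ⟨a, ha⟩ : V) = (σ c ⟨b, hb⟩ : V) → a = b := by
      intro c a b ha hb hab
      have := (σ c).injective (Subtype.ext hab)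
      exact congrArg Subtype.val this
    have hy' : y ∈ (F.connectedComponentMk x).supp := by
      rw [SimpleGraph.ConnectedComponent.mem_supp_iff, ← hcc]
    have t1 : τ (F.connectedComponentMk x) y = (σ (F.connectedComponentMk x) ⟨y, hy'⟩ : V) := by
      simp only [hτ, dif_pos hy']
    have : (σ (F.connectedComponentMk x) ⟨y, hy'⟩ : V) = (σ (F.connectedComponentMk y) ⟨y, hy⟩ : V) := by
      rw [← t1, ← hyv, hcc]
    exact inj_c _ x y hx hy' (by rw [hxy, ← this])
  · intro x
    dsimp only
    have hx : x ∈ (F.connectedComponentMk x).supp := rfl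
    have : τ (F.connectedComponentMk x) x = (σ _ ⟨x, hx⟩ : V) := by
      simp only [hτ, dif_pos hx]
    rw [this]
    exact hσ (F.connectedComponentMk x) ⟨x, hx⟩

end AuxSucc

section AuxCard

lemma ncard_range_fin {γ : Type*} {m : ℕ} (g : Fin m → γ) (hg : Function.Injective g) :
    (Set.range g).ncard = m := by
  rw [← Set.image_univ, Set.ncard_image_of_injective _ hg, Set.ncard_univ,
    Nat.card_eq_fintype_card, Fintype.card_fin]

end AuxCard

section EG3

open Sum

variable {n k : ℕ}

local notation "V3" => (Fin (n + k + 2) ⊕ (Fin (k + 1) ⊕ Fin 2))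

lemma eg3_adj_inl (a : Fin (n + k + 2)) (y : V3) (h : Sum.inl a ≠ y) :
    (exampleGraph3 n k).Adj (Sum.inl a) y := by
  cases y with
  | inl b =>
    have hab : a ≠ b := fun hab => h (by rw [hab])
    exact hab
  | inr x => trivial

lemma eg3_not_adj_pendant (j : Fin (k + 1)) (y : Fin (k + 1) ⊕ Fin 2) :
    ¬ (exampleGraph3 n k).Adj (Sum.inr (Sum.inl j)) (Sum.inr y) := by
  show ¬ ((⊥ : SimpleGraph (Fin (k + 1))) ⊕g (⊤ : SimpleGraph (Fin 2))).Adj (Sum.inl j) y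
  cases y <;> simp

lemma eg3_adj_k2 (b : Fin 2) (y : Fin (k + 1) ⊕ Fin 2)
    (h : (exampleGraph3 n k).Adj (Sum.inr (Sum.inr b)) (Sum.inr y)) : y = Sum.inr (b + 1) := by
  have h' : ((⊥ : SimpleGraph (Fin (k + 1))) ⊕g (⊤ : SimpleGraph (Fin 2))).Adj (Sum.inr b) y := h
  cases y with
  | inl => simp at h'
  | inr b' =>
    simp only [SimpleGraph.sum_adj, SimpleGraph.top_adj] at h'
    clear h
    congr 1
    revert b b'; decide

lemma eg3_adj_k2' (b : Fin 2) :
    (exampleGraph3 n k).Adj (Sum.inr (Sum.inr b)) (Sum.inr (Sum.inr (b + 1))) := by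
  show ((⊥ : SimpleGraph (Fin (k + 1))) ⊕g (⊤ : SimpleGraph (Fin 2))).Adj (Sum.inr b) (Sum.inr (b + 1))
  simp only [SimpleGraph.sum_adj, SimpleGraph.top_adj]
  revert b; decide

end EG3

section Parts

variable {n k : ℕ}

lemma part1 (n k : ℕ) : IsMConnected (exampleGraph3 n k) (n + k + 2) := by
  constructor
  · simp only [Nat.card_eq_fintype_card, Fintype.card_sum, Fintype.card_fin]
    omega
  · intro S hS
    have hex : ∃ a : Fin (n + k + 2), Sum.inl a ∉ S := by
      by_contra hcon
      push_neg at hcon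
      have hsub : Set.range (Sum.inl : Fin (n + k + 2) → Fin (n + k + 2) ⊕ (Fin (k + 1) ⊕ Fin 2)) ⊆ S := by
        rintro _ ⟨a, rfl⟩; exact hcon a
      have h1 : (Set.range (Sum.inl : Fin (n + k + 2) → Fin (n + k + 2) ⊕ (Fin (k + 1) ⊕ Fin 2))).ncard = n + k + 2 :=
        ncard_range_fin _ Sum.inl_injective
      have h2 := Set.ncard_le_ncard hsub (Set.toFinite S)
      omega
    obtain ⟨a, ha⟩ := hex
    rw [SimpleGraph.connected_iff]
    have key : ∀ z : ↥(Sᶜ), ((exampleGraph3 n k).delVerts S).Reachable ⟨Sum.inl a, ha⟩ z := by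
      rintro ⟨z, hz⟩
      by_cases hz' : Sum.inl a = z
      · subst hz'
        exact SimpleGraph.Reachable.refl _
      · have hadj : (exampleGraph3 n k).Adj (Sum.inl a) z := eg3_adj_inl a z hz'
        exact SimpleGraph.Adj.reachable hadj
    exact ⟨fun x y => (key x).symm.trans (key y), ⟨⟨Sum.inl a, ha⟩⟩⟩

lemma part2 (n k : ℕ) (S : Set (Fin (n + k + 2) ⊕ (Fin (k + 1) ⊕ Fin 2)))
    (hiso : 2 ≤ isoCount ((exampleGraph3 n k).delVerts S)) :
    ((n : ℝ) + k + 3) / ((k : ℝ) + 2) ≤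
      (S.ncard : ℝ) / (isoCount ((exampleGraph3 n k).delVerts S) : ℝ) := by
  classical
  set I : Set ↥(Sᶜ) := {v | ∀ w, ¬ ((exampleGraph3 n k).delVerts S).Adj v w} with hI
  have hiso_eq : isoCount ((exampleGraph3 n k).delVerts S) = I.ncard :=
    Nat.card_coe_set_eq I
  rw [hiso_eq] at hiso ⊢
  -- all inl vertices in S
  have hall : ∀ a : Fin (n + k + 2), Sum.inl a ∈ S := by
    by_contra hcon
    push_neg at hcon
    obtain ⟨a, ha⟩ := hcon
    have hsub : I ⊆ {(⟨Sum.inl a, ha⟩ : ↥(Sᶜ))} := by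
      intro v hv
      by_contra hne
      have hne' : Sum.inl a ≠ v.1 := by
        intro hh
        exact hne (by apply Subtype.ext; exact hh.symm)
      have hadj : ((exampleGraph3 n k).delVerts S).Adj v ⟨Sum.inl a, ha⟩ :=
        (eg3_adj_inl a v.1 hne').symm
      exact hv _ hadj
    have := le_trans (Set.ncard_le_ncard hsub (Set.finite_singleton _))
      (le_of_eq (Set.ncard_singleton _))
    omega
  have hSrange : Set.range (Sum.inl : Fin (n + k + 2) → Fin (n + k + 2) ⊕ (Fin (k + 1) ⊕ Fin 2)) ⊆ S := by
    rintro _ ⟨a, rfl⟩; exact hall a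
  have hrange_card : (Set.range (Sum.inl : Fin (n + k + 2) → Fin (n + k + 2) ⊕ (Fin (k + 1) ⊕ Fin 2))).ncard = n + k + 2 :=
    ncard_range_fin _ Sum.inl_injective
  set f : ↥(Sᶜ) → (Fin (k + 1) ⊕ Fin 2) := fun v => Sum.elim (fun _ => Sum.inr 0) id v.1 with hf
  have hmemI : ∀ v : ↥(Sᶜ), v ∈ I → ∃ x, v.1 = Sum.inr x := by
    rintro ⟨val, hvS⟩ _
    cases val with
    | inl a => exact absurd (hall a) hvS
    | inr x => exact ⟨x, rfl⟩
  have hinj : Set.InjOn f I := by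
    intro v hv w hw hvw
    obtain ⟨x, hx⟩ := hmemI v hv
    obtain ⟨y, hy⟩ := hmemI w hw
    apply Subtype.ext
    simp only [hf, hx, hy, Sum.elim_inr, id] at hvw
    rw [hx, hy, hvw]
  have hiso_pos : (0 : ℝ) < (I.ncard : ℝ) := by positivity
  rw [div_le_div_iff₀ (by positivity) hiso_pos]
  by_cases hK2 : ∃ v ∈ I, ∃ b : Fin 2, v.1 = Sum.inr (Sum.inr b)
  · obtain ⟨v, hvI, b, hvb⟩ := hK2
    have hother : Sum.inr (Sum.inr (b + 1)) ∈ S := by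
      by_contra hS2
      have hadj : ((exampleGraph3 n k).delVerts S).Adj v ⟨Sum.inr (Sum.inr (b + 1)), hS2⟩ := by
        show (exampleGraph3 n k).Adj v.1 (Sum.inr (Sum.inr (b + 1)))
        rw [hvb]
        exact eg3_adj_k2' b
      exact hvI _ hadj
    have hScard : n + k + 3 ≤ S.ncard := by
      have hsub : insert (Sum.inr (Sum.inr (b + 1)))
          (Set.range (Sum.inl : Fin (n + k + 2) → Fin (n + k + 2) ⊕ (Fin (k + 1) ⊕ Fin 2))) ⊆ S := by
        rintro x hx
        rcases Set.mem_insert_iff.mp hx with rfl | hx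
        · exact hother
        · exact hSrange hx
      have h1 : (insert (Sum.inr (Sum.inr (b + 1)))
          (Set.range (Sum.inl : Fin (n + k + 2) → Fin (n + k + 2) ⊕ (Fin (k + 1) ⊕ Fin 2)))).ncard = n + k + 3 := by
        rw [Set.ncard_insert_of_notMem (by simp) (Set.toFinite _), hrange_card]
      have h2 := Set.ncard_le_ncard hsub (Set.toFinite S)
      omega
    have hIcard : I.ncard ≤ k + 2 := by
      have him : f '' I ⊆ insert (Sum.inr b) (Set.range (Sum.inl : Fin (k + 1) → Fin (k + 1) ⊕ Fin 2)) := by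
        rintro _ ⟨w, hw, rfl⟩
        obtain ⟨x, hx⟩ := hmemI w hw
        cases x with
        | inl j =>
          have hfw : f w = Sum.inl j := by simp only [hf, hx, Sum.elim_inr, id]
          rw [hfw]
          exact Set.mem_insert_of_mem _ ⟨j, rfl⟩
        | inr b' =>
          have hbb : b' = b := by
            by_contra hbb
            have hadj : ((exampleGraph3 n k).delVerts S).Adj w v := by
              show (exampleGraph3 n k).Adj w.1 v.1
              rw [hx, hvb]
              show ((⊥ : SimpleGraph (Fin (k + 1))) ⊕g (⊤ : SimpleGraph (Fin 2))).Adj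
                (Sum.inr b') (Sum.inr b)
              simp only [SimpleGraph.sum_adj, SimpleGraph.top_adj]
              exact hbb
            exact hw _ hadj
          have hfw : f w = Sum.inr b := by simp only [hf, hx, Sum.elim_inr, id, hbb]
          rw [hfw]
          exact Set.mem_insert _ _
      have e1 : I.ncard = (f '' I).ncard := (Set.ncard_image_of_injOn hinj).symm
      have e2 : (f '' I).ncard ≤ (insert (Sum.inr b) (Set.range (Sum.inl : Fin (k + 1) → Fin (k + 1) ⊕ Fin 2))).ncard :=
        Set.ncard_le_ncard him (Set.toFinite _)
      have e3 := Set.ncard_insert_le (Sum.inr b : Fin (k + 1) ⊕ Fin 2) (Set.range (Sum.inl : Fin (k + 1) → Fin (k + 1) ⊕ Fin 2))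
      have e4 : (Set.range (Sum.inl : Fin (k + 1) → Fin (k + 1) ⊕ Fin 2)).ncard = k + 1 :=
        ncard_range_fin _ Sum.inl_injective
      omega
    have c1 : (I.ncard : ℝ) ≤ (k : ℝ) + 2 := by exact_mod_cast hIcard
    have c2 : (n : ℝ) + k + 3 ≤ (S.ncard : ℝ) := by exact_mod_cast hScard
    nlinarith [mul_le_mul_of_nonneg_left c1 (show (0:ℝ) ≤ (n:ℝ) + k + 3 by positivity),
      mul_le_mul_of_nonneg_right c2 (show (0:ℝ) ≤ (k:ℝ) + 2 by positivity)]
  · push_neg at hK2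
    have hIcard : I.ncard ≤ k + 1 := by
      have him : f '' I ⊆ Set.range (Sum.inl : Fin (k + 1) → Fin (k + 1) ⊕ Fin 2) := by
        rintro _ ⟨w, hw, rfl⟩
        obtain ⟨x, hx⟩ := hmemI w hw
        cases x with
        | inl j =>
          have hfw : f w = Sum.inl j := by simp only [hf, hx, Sum.elim_inr, id]
          rw [hfw]
          exact ⟨j, rfl⟩
        | inr b' => exact absurd hx (hK2 w hw b')
      have e1 : I.ncard = (f '' I).ncard := (Set.ncard_image_of_injOn hinj).symm
      have e2 : (f '' I).ncard ≤ (Set.range (Sum.inl : Fin (k + 1) → Fin (k + 1) ⊕ Fin 2)).ncard :=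
        Set.ncard_le_ncard him (Set.toFinite _)
      have e4 : (Set.range (Sum.inl : Fin (k + 1) → Fin (k + 1) ⊕ Fin 2)).ncard = k + 1 :=
        ncard_range_fin _ Sum.inl_injective
      omega
    have hScard : n + k + 2 ≤ S.ncard := by
      have h2 := Set.ncard_le_ncard hSrange (Set.toFinite S)
      omega
    have c1 : (I.ncard : ℝ) ≤ (k : ℝ) + 1 := by exact_mod_cast hIcard
    have c2 : (n : ℝ) + k + 2 ≤ (S.ncard : ℝ) := by exact_mod_cast hScard
    nlinarith [mul_le_mul_of_nonneg_left c1 (show (0:ℝ) ≤ (n:ℝ) + k + 3 by positivity),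
      mul_le_mul_of_nonneg_right c2 (show (0:ℝ) ≤ (k:ℝ) + 2 by positivity),
      Nat.cast_nonneg (α := ℝ) n, Nat.cast_nonneg (α := ℝ) k]

end Parts

section Parts2

lemma part3 (n k : ℕ) :
    ∃ S : Set (Fin (n + k + 2) ⊕ (Fin (k + 1) ⊕ Fin 2)),
      2 ≤ isoCount ((exampleGraph3 n k).delVerts S) ∧
      (S.ncard : ℝ) / (isoCount ((exampleGraph3 n k).delVerts S) : ℝ) =
        ((n : ℝ) + k + 3) / ((k : ℝ) + 2) := by
  set S : Set (Fin (n + k + 2) ⊕ (Fin (k + 1) ⊕ Fin 2)) :=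
    insert (Sum.inr (Sum.inr 0)) (Set.range (Sum.inl : Fin (n + k + 2) → Fin (n + k + 2) ⊕ (Fin (k + 1) ⊕ Fin 2))) with hSdef
  have hc : ∀ v : ↥(Sᶜ), ∀ w : ↥(Sᶜ), ¬ ((exampleGraph3 n k).delVerts S).Adj v w := by
    rintro ⟨x, hxS⟩ ⟨y, hyS⟩ hadj
    have hadj' : (exampleGraph3 n k).Adj x y := hadj
    cases x with
    | inl a => exact hxS (Set.mem_insert_of_mem _ ⟨a, rfl⟩)
    | inr x' =>
      cases y with
      | inl b => exact hyS (Set.mem_insert_of_mem _ ⟨b, rfl⟩)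
      | inr y' =>
        cases x' with
        | inl j => exact eg3_not_adj_pendant j y' hadj'
        | inr b =>
          have hy' := eg3_adj_k2 b y' hadj'
          have hb : b ≠ 0 := by
            intro hb0
            exact hxS (by rw [hb0]; exact Set.mem_insert _ _)
          have hb1 : b = 1 := by
            have h0 : (b : ℕ) ≠ 0 := fun h => hb (Fin.ext (by simpa using h))
            have h2 : (b : ℕ) < 2 := b.2
            exact Fin.ext (by simp only [Fin.val_one]; omega)
          rw [hb1] at hy'
          have h11 : (1 + 1 : Fin 2) = 0 := by decide
          have hy0 : y' = Sum.inr 0 := by rw [hy', h11]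
          exact hyS (by rw [hy0]; exact Set.mem_insert _ _)
  have hSc : S.ncard = n + k + 3 := by
    rw [hSdef, Set.ncard_insert_of_notMem (by simp) (Set.toFinite _),
      ncard_range_fin _ Sum.inl_injective]
  have hcc : Sᶜ.ncard = k + 2 := by
    have htot := Set.ncard_add_ncard_compl S (Set.toFinite _) (Set.toFinite _)
    have : Nat.card (Fin (n + k + 2) ⊕ (Fin (k + 1) ⊕ Fin 2)) = n + 2 * k + 5 := by
      simp only [Nat.card_eq_fintype_card, Fintype.card_sum, Fintype.card_fin]
      omega
    omega
  have hisoval : isoCount ((exampleGraph3 n k).delVerts S) = k + 2 := by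
    have h1 : isoCount ((exampleGraph3 n k).delVerts S) = Nat.card ↥(Sᶜ) :=
      Nat.card_congr (Equiv.subtypeUnivEquiv hc)
    rw [h1, Nat.card_coe_set_eq, hcc]
  refine ⟨S, by omega, ?_⟩
  rw [hisoval, hSc]
  push_cast
  ring

lemma part4 (n k : ℕ) :
    ((n : ℝ) + k + 4) / ((k : ℝ) + 3) < ((n : ℝ) + k + 3) / ((k : ℝ) + 2) := by
  rw [div_lt_div_iff₀ (by positivity) (by positivity)]
  nlinarith [Nat.cast_nonneg (α := ℝ) n, Nat.cast_nonneg (α := ℝ) k]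

lemma part5 (n k : ℕ) : ¬ K2CycleFactorCriticalAvoidable (exampleGraph3 n k) n := by
  intro hcrit
  classical
  set W : Set (Fin (n + k + 2) ⊕ (Fin (k + 1) ⊕ Fin 2)) :=
    Set.range (fun i : Fin n => (Sum.inl (Fin.castLE (by omega) i) :
      Fin (n + k + 2) ⊕ (Fin (k + 1) ⊕ Fin 2))) with hWdef
  have hWmem : ∀ x : Fin (k + 1) ⊕ Fin 2, Sum.inr x ∉ W := by
    rintro x ⟨i, hi⟩
    exact Sum.inl_ne_inr hi
  have hWinl : ∀ a : Fin (n + k + 2), Sum.inl a ∈ W ↔ (a : ℕ) < n := by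
    intro a
    constructor
    · rintro ⟨i, hi⟩
      have := Sum.inl.inj hi
      rw [← this]
      simpa using i.2
    · intro ha
      exact ⟨⟨(a : ℕ), ha⟩, by simp [Fin.ext_iff]⟩
  have hWcard : W.ncard = n := by
    rw [hWdef]
    apply ncard_range_fin
    intro i j hij
    have := Sum.inl.inj hij
    simpa [Fin.ext_iff] using this
  set u : Fin (n + k + 2) ⊕ (Fin (k + 1) ⊕ Fin 2) := Sum.inr (Sum.inr 0) with hu
  set v : Fin (n + k + 2) ⊕ (Fin (k + 1) ⊕ Fin 2) := Sum.inr (Sum.inr 1) with hv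
  have hadj : (exampleGraph3 n k).Adj u v := by
    have := eg3_adj_k2' (n := n) (k := k) 0
    simpa using this
  obtain ⟨F, hFle, hFcomp⟩ := hcrit W hWcard u v (hWmem _) (hWmem _) hadj
  obtain ⟨g, hginj, hgadj⟩ := exists_succ_perm F hFcomp
  -- pendant vertices
  have hqmem : ∀ x : Fin (k + 1) ⊕ Fin 2, Sum.inr x ∈ Wᶜ := fun x => hWmem x
  set q : Fin (k + 3) → ↥(Wᶜ) := fun i =>
    if h : (i : ℕ) < k + 1 then ⟨Sum.inr (Sum.inl ⟨i, h⟩), hqmem _⟩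
    else ⟨Sum.inr (Sum.inr ⟨(i : ℕ) - (k + 1), by omega⟩), hqmem _⟩ with hq
  have hqinj : Function.Injective q := by
    intro i j hij
    have hval := congrArg Subtype.val hij
    by_cases hi : (i : ℕ) < k + 1 <;> by_cases hj : (j : ℕ) < k + 1
    · simp only [hq] at hval
      rw [dif_pos hi, dif_pos hj] at hval
      simp only [Sum.inr.injEq, Sum.inl.injEq, Fin.mk.injEq] at hval
      exact Fin.ext hval
    · simp only [hq] at hval
      rw [dif_pos hi, dif_neg hj] at hval
      simp at hval
    · simp only [hq] at hval
      rw [dif_neg hi, dif_pos hj] at hval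
      simp at hval
    · simp only [hq] at hval
      rw [dif_neg hi, dif_neg hj] at hval
      simp only [Sum.inr.injEq, Fin.mk.injEq] at hval
      have hi2 := i.2
      have hj2 := j.2
      apply Fin.ext
      omega
  -- key: the successor of each pendant is a surviving hub vertex
  have hkey : ∀ i : Fin (k + 3), ∃ a : Fin (n + k + 2),
      (g (q i)).1 = Sum.inl a ∧ n ≤ (a : ℕ) := by
    intro i
    have hadjF := hgadj (q i)
    have hadjD : ((exampleGraph3 n k).deleteEdges {s(u, v)}).Adj (q i).1 (g (q i)).1 :=
      hFle hadjF
    rw [SimpleGraph.deleteEdges_adj] at hadjD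
    obtain ⟨hadjG, hne⟩ := hadjD
    rcases hgval : (g (q i)).1 with a | y
    · refine ⟨a, rfl, ?_⟩
      have hmem := (g (q i)).2
      rw [hgval] at hmem
      by_contra hlt
      exact hmem ((hWinl a).mpr (by omega))
    · exfalso
      rw [hgval] at hadjG hne
      by_cases hi : (i : ℕ) < k + 1
      · have hqi : (q i).1 = Sum.inr (Sum.inl ⟨i, hi⟩) := by
          simp only [hq]; rw [dif_pos hi]
        rw [hqi] at hadjG
        exact eg3_not_adj_pendant _ _ hadjG
      · have hqi : (q i).1 = Sum.inr (Sum.inr ⟨(i : ℕ) - (k + 1), by omega⟩) := by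
          simp only [hq]; rw [dif_neg hi]
        rw [hqi] at hadjG hne
        have hy := eg3_adj_k2 _ y hadjG
        rw [hy] at hne
        apply hne
        have hbv : ((⟨(i : ℕ) - (k + 1), by omega⟩ : Fin 2) : ℕ) < 2 := Fin.is_lt _
        rcases (by omega : ((⟨(i : ℕ) - (k + 1), by omega⟩ : Fin 2) : ℕ) = 0 ∨
            ((⟨(i : ℕ) - (k + 1), by omega⟩ : Fin 2) : ℕ) = 1) with h | h
        · have hb0 : (⟨(i : ℕ) - (k + 1), by omega⟩ : Fin 2) = 0 := Fin.ext (by simpa using h)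
          rw [hb0]
          have h01 : (0 + 1 : Fin 2) = 1 := by decide
          rw [h01]
          exact rfl
        · have hb1 : (⟨(i : ℕ) - (k + 1), by omega⟩ : Fin 2) = 1 := Fin.ext (by simpa using h)
          rw [hb1]
          have h10 : (1 + 1 : Fin 2) = 0 := by decide
          rw [h10]
          show s(v, u) ∈ {s(u, v)}
          rw [Sym2.eq_swap]
          exact rfl
  choose a ha han using hkey
  have hainj : Function.Injective a := by
    intro i j hij
    apply hqinj
    apply hginj
    apply Subtype.ext
    rw [ha i, ha j, hij]
  set e : Fin (k + 3) → Fin (k + 2) := fun i =>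
    ⟨(a i : ℕ) - n, by have h2 := (a i).2; have h3 := han i; omega⟩ with he
  have heinj : Function.Injective e := by
    intro i j hij
    apply hainj
    apply Fin.ext
    have h1 := han i
    have h2 := han j
    have h3 := congrArg Fin.val hij
    simp only [he] at h3
    omega
  have hcard := Fintype.card_le_of_injective e heinj
  simp only [Fintype.card_fin] at hcard
  omega

end Parts2

/-- For `n ≥ k+1`, the graph `G = K_{n+k+2} + ((k+1)K₁ ∪ K₂)` is
`(n+k+2)`-connected, its isolated toughness equals `(n+k+3)/(k+2)`, which is greater
than `(n+k+4)/(k+3)`, and `G` is not a `({K₂,C}, n)`-factor critical avoidable graph. -/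
theorem statement13 (n k : ℕ) (hnk : k + 1 ≤ n) :
    IsMConnected (exampleGraph3 n k) (n + k + 2) ∧
    (∀ S : Set (Fin (n + k + 2) ⊕ (Fin (k + 1) ⊕ Fin 2)),
      2 ≤ isoCount ((exampleGraph3 n k).delVerts S) →
      ((n : ℝ) + k + 3) / ((k : ℝ) + 2) ≤
        (S.ncard : ℝ) / (isoCount ((exampleGraph3 n k).delVerts S) : ℝ)) ∧
    (∃ S : Set (Fin (n + k + 2) ⊕ (Fin (k + 1) ⊕ Fin 2)),
      2 ≤ isoCount ((exampleGraph3 n k).delVerts S) ∧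
      (S.ncard : ℝ) / (isoCount ((exampleGraph3 n k).delVerts S) : ℝ) =
        ((n : ℝ) + k + 3) / ((k : ℝ) + 2)) ∧
    ((n : ℝ) + k + 4) / ((k : ℝ) + 3) < ((n : ℝ) + k + 3) / ((k : ℝ) + 2) ∧
    ¬ K2CycleFactorCriticalAvoidable (exampleGraph3 n k) n :=
  ⟨part1 n k, fun S hS => part2 n k S hS, part3 n k, part4 n k, part5 n k⟩
end
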